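/- arXiv:2601.08453 — 6 statements merged into one kernel-verified Lean document; each statement's English description precedes it below -/
import Mathlib

section
/- Let m, r be positive integers and p a natural number with p ≥ r·m. Then the r-associated Stirling number of the second kind satisfies S_r(p,m) = (p!/m!) · Σ_{i₁+⋯+i_m = p−rm} 1/((r+i₁)! ⋯ (r+i_m)!), where the sum ranges over all tuples (i₁,…,i_m) of natural numbers with i₁+⋯+i_m = p−rm. -/
open Finset Equiv

section AuxStirling
variable {p m : ℕ}

def fib (f : Fin p → Fin m) (j : Fin m) : Finset (Fin p) :=
  Finset.univ.filter fun x => f x = j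





lemma card_fib_comp (f : Fin p → Fin m) (σ : Equiv.Perm (Fin p)) (j : Fin m) :
    (fib (f ∘ σ) j).card = (fib f j).card := by
  apply Finset.card_bij' (fun x _ => σ x) (fun y _ => σ.symm y) <;>
    simp [fib]

/-- permutations carrying `g` to `f` are fiberwise bijections -/
def permFiberEquiv (f g : Fin p → Fin m) :
    {σ : Equiv.Perm (Fin p) // g ∘ σ = f} ≃ (∀ j, {x // f x = j} ≃ {x // g x = j}) where
  toFun σ j := Equiv.subtypeEquiv σ.1 (fun x => by
    constructor
    · rintro rfl; exact (congrFun σ.2 x).symm ▸ rfl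
    · intro h; rw [← h, ← congrFun σ.2 x]; rfl)
  invFun F := ⟨Equiv.ofFiberEquiv F, funext fun x => Equiv.ofFiberEquiv_map F x⟩
  left_inv σ := Subtype.ext (Equiv.ext fun x => rfl)
  right_inv F := by
    funext j; ext ⟨x, hx⟩
    subst hx; rfl

def sigmaFstFiber {ι : Type*} {β : ι → Type*} (j : ι) : {y : Σ i, β i // y.1 = j} ≃ β j where
  toFun y := y.2 ▸ y.1.2
  invFun b := ⟨⟨j, b⟩, rfl⟩
  left_inv := by rintro ⟨⟨i, b⟩, rfl⟩; rfl
  right_inv b := rfl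

lemma card_fixed_fibers (c : Fin m → ℕ) (hc : ∑ j, c j = p) :
    Nat.card {f : Fin p → Fin m // ∀ j, (fib f j).card = c j} * ∏ j, (c j).factorial
      = p.factorial := by
  classical
  obtain ⟨e⟩ : Nonempty ((Σ j, Fin (c j)) ≃ Fin p) :=
    ⟨Fintype.equivOfCardEq (by simp [hc])⟩
  set f0 : Fin p → Fin m := fun x => (e.symm x).1 with hf0def
  have hf0 : ∀ j, (fib f0 j).card = c j := by
    intro j
    rw [fib, ← Fintype.card_subtype]
    rw [Fintype.card_congr ((e.symm).subtypeEquiv (q := fun y => y.1 = j) fun x => Iff.rfl)]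
    rw [Fintype.card_congr (sigmaFstFiber j)]
    simp
  set F := {f : Fin p → Fin m // ∀ j, (fib f j).card = c j} with hF
  set Θ : Equiv.Perm (Fin p) → F := fun σ =>
    ⟨f0 ∘ σ, fun j => (card_fib_comp f0 σ j).trans (hf0 j)⟩ with hΘ
  have key : Fintype.card (Equiv.Perm (Fin p)) = Fintype.card F * ∏ j, (c j).factorial := by
    rw [Fintype.card_congr (Equiv.sigmaFiberEquiv Θ).symm, Fintype.card_sigma]
    have : ∀ f : F, Fintype.card {σ // Θ σ = f} = ∏ j, (c j).factorial := by
      intro f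
      have e1 : {σ // Θ σ = f} ≃ {σ : Equiv.Perm (Fin p) // f0 ∘ σ = f.1} :=
        Equiv.subtypeEquivRight fun σ => by
          rw [hΘ]; constructor
          · intro h; exact congrArg Subtype.val h
          · intro h; exact Subtype.ext h
      rw [Fintype.card_congr (e1.trans (permFiberEquiv f.1 f0)), Fintype.card_pi]
      refine Finset.prod_congr rfl fun j _ => ?_
      have h1 : Fintype.card {x // f.1 x = j} = c j := by
        rw [Fintype.card_subtype]; exact f.2 j
      have h2 : Fintype.card {x // f0 x = j} = c j := by
        rw [Fintype.card_subtype]; exact hf0 j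
      rw [Fintype.card_equiv (Fintype.equivOfCardEq (h1.trans h2.symm)), h1]
    simp only [this, Finset.sum_const, Finset.card_univ, smul_eq_mul]
  rw [Nat.card_eq_fintype_card, ← key, Fintype.card_perm, Fintype.card_fin]


variable {p m : ℕ}


lemma mem_fib {f : Fin p → Fin m} {j : Fin m} {x : Fin p} : x ∈ fib f j ↔ f x = j := by
  simp [fib]

lemma fib_injective {f : Fin p → Fin m} (hf : ∀ j, (fib f j).Nonempty) :
    Function.Injective (fib f) := by
  intro j j' h
  obtain ⟨x, hx⟩ := hf j
  have hx' : x ∈ fib f j' := h ▸ hx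
  rw [mem_fib] at hx hx'
  rw [← hx, hx']

def partnOf (f : Fin p → Fin m) (hf : ∀ j, (fib f j).Nonempty) :
    Finpartition (Finset.univ : Finset (Fin p)) where
  parts := Finset.univ.image (fib f)
  supIndep := by
    rw [Finset.supIndep_iff_pairwiseDisjoint]
    rintro s hs t ht hst
    simp only [Finset.coe_image, Set.mem_image, Finset.coe_univ, Set.image_univ,
      Set.mem_range] at hs ht
    obtain ⟨j, rfl⟩ := hs
    obtain ⟨j', rfl⟩ := ht
    simp only [Function.onFun, id_eq]
    rw [Finset.disjoint_left]
    intro x hx hx'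
    rw [mem_fib] at hx hx'
    exact hst (by rw [← hx, hx'])
  sup_parts := by
    ext x
    simp only [Finset.mem_sup, Finset.mem_image, id_eq, Finset.mem_univ, iff_true]
    exact ⟨fib f (f x), ⟨f x, trivial, rfl⟩, mem_fib.2 rfl⟩
  bot_notMem := by
    simp only [Finset.bot_eq_empty, Finset.mem_image, Finset.mem_univ, true_and]
    rintro ⟨j, hj⟩
    exact (hf j).ne_empty hj
lemma partnOf_parts (f : Fin p → Fin m) (hf : ∀ j, (fib f j).Nonempty) :
    (partnOf f hf).parts = Finset.univ.image (fib f) := rfl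
lemma partnOf_parts_card (f : Fin p → Fin m) (hf : ∀ j, (fib f j).Nonempty) :
    (partnOf f hf).parts.card = m := by
  rw [partnOf_parts, Finset.card_image_of_injective _ (fib_injective hf), Finset.card_univ,
    Fintype.card_fin]
lemma partnOf_part (f : Fin p → Fin m) (hf : ∀ j, (fib f j).Nonempty) (x : Fin p) :
    (partnOf f hf).part x = fib f (f x) := by
  refine (partnOf f hf).part_eq_of_mem ?_ (mem_fib.2 rfl)
  rw [partnOf_parts]
  exact Finset.mem_image_of_mem _ (Finset.mem_univ _)

-- labeling
def kappa (f : Fin p → Fin m) (hf : ∀ j, (fib f j).Nonempty) :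
    Fin m → {s // s ∈ (partnOf f hf).parts} := fun j =>
  ⟨fib f j, by rw [partnOf_parts]; exact Finset.mem_image_of_mem _ (Finset.mem_univ _)⟩

lemma kappa_bijective (f : Fin p → Fin m) (hf : ∀ j, (fib f j).Nonempty) :
    Function.Bijective (kappa f hf) := by
  rw [Fintype.bijective_iff_injective_and_card]
  constructor
  · intro j j' h
    exact fib_injective hf (congrArg Subtype.val h)
  · rw [Fintype.card_coe, partnOf_parts_card, Fintype.card_fin]

lemma fib_label (P : Finpartition (Finset.univ : Finset (Fin p)))
    (e : {s // s ∈ P.parts} ≃ Fin m) (j : Fin m) :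
    fib (fun x => e ⟨P.part x, P.part_mem.2 (Finset.mem_univ x)⟩) j = (e.symm j).1 := by
  ext x
  rw [mem_fib]
  constructor
  · rintro rfl
    rw [Equiv.symm_apply_apply]
    exact P.mem_part (Finset.mem_univ x)
  · intro hx
    have h1 : P.part x = (e.symm j).1 := P.part_eq_of_mem (e.symm j).2 hx
    have h2 : (⟨P.part x, P.part_mem.2 (Finset.mem_univ x)⟩ : {s // s ∈ P.parts}) = e.symm j :=
      Subtype.ext h1
    rw [h2, Equiv.apply_symm_apply]

variable (r : ℕ)

lemma fib_nonempty (hr : 0 < r) {f : Fin p → Fin m} (hf : ∀ j, r ≤ (fib f j).card) :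
    ∀ j, (fib f j).Nonempty := fun j =>
  Finset.card_pos.1 (lt_of_lt_of_le hr (hf j))

instance : Finite (Finpartition (Finset.univ : Finset (Fin p))) :=
  Finite.of_injective Finpartition.parts fun P Q h => Finpartition.ext h

section
variable (hr : 0 < r)

abbrev Good (r p m : ℕ) := {f : Fin p → Fin m // ∀ j, r ≤ (fib f j).card}
abbrev StP (r p m : ℕ) := {P : Finpartition (Finset.univ : Finset (Fin p)) //
    P.parts.card = m ∧ ∀ s ∈ P.parts, r ≤ s.card}

def Phi (hr : 0 < r) : Good r p m → StP r p m := fun f =>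
  ⟨partnOf f.1 (fib_nonempty r hr f.2), partnOf_parts_card _ _, by
    intro s hs
    rw [partnOf_parts] at hs
    obtain ⟨j, -, rfl⟩ := Finset.mem_image.1 hs
    exact f.2 j⟩

noncomputable def labelEquiv (P : StP r p m) :
    {f : Good r p m // Phi r hr f = P} ≃ ({s // s ∈ P.1.parts} ≃ Fin m) where
  toFun fP :=
    (Equiv.subtypeEquivRight (q := fun s =>
        s ∈ (partnOf fP.1.1 (fib_nonempty r hr fP.1.2)).parts) fun s => by
      rw [← congrArg Subtype.val fP.2]; exact Iff.rfl).trans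
      (Equiv.ofBijective _ (kappa_bijective fP.1.1 (fib_nonempty r hr fP.1.2))).symm
  invFun e :=
    ⟨⟨fun x => e ⟨P.1.part x, P.1.part_mem.2 (Finset.mem_univ x)⟩, fun j => by
        rw [fib_label]; exact P.2.2 _ (e.symm j).2⟩, by
      apply Subtype.ext
      apply Finpartition.ext
      simp only [Phi]
      rw [partnOf_parts]
      ext s
      constructor
      · intro hs
        obtain ⟨j, -, rfl⟩ := Finset.mem_image.1 hs
        rw [fib_label]
        exact (e.symm j).2
      · intro hs
        refine Finset.mem_image.2 ⟨e ⟨s, hs⟩, Finset.mem_univ _, ?_⟩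
        rw [fib_label, Equiv.symm_apply_apply]⟩
  left_inv fP := by
    apply Subtype.ext
    apply Subtype.ext
    funext x
    set f := fP.1.1
    have hne := fib_nonempty r hr fP.1.2
    have hP : P.1 = partnOf f hne := (congrArg Subtype.val fP.2).symm
    -- goal : value of toFun applied to part x equals f x
    show (Equiv.ofBijective _ (kappa_bijective f hne)).symm
        ⟨P.1.part x, _⟩ = f x
    rw [Equiv.symm_apply_eq]
    apply Subtype.ext
    show P.1.part x = fib f (f x)
    rw [hP, partnOf_part]
  right_inv e := by
    apply Equiv.ext
    rintro ⟨s, hs⟩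
    rw [Equiv.trans_apply, Equiv.symm_apply_eq]
    apply Subtype.ext
    show s = fib (fun x => e ⟨P.1.part x, P.1.part_mem.2 (Finset.mem_univ x)⟩) (e ⟨s, hs⟩)
    rw [fib_label, Equiv.symm_apply_apply]

lemma card_good (hr : 0 < r) :
    Fintype.card (Good r p m) = Nat.card (StP r p m) * m.factorial := by
  classical
  letI : Fintype (StP r p m) := Fintype.ofFinite _
  rw [Fintype.card_congr (Equiv.sigmaFiberEquiv (Phi r hr)).symm, Fintype.card_sigma]
  have : ∀ P : StP r p m, Fintype.card {f // Phi r hr f = P} = m.factorial := by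
    intro P
    have hcard : Fintype.card {s // s ∈ P.1.parts} = m := by
      rw [Fintype.card_coe, P.2.1]
    rw [Fintype.card_congr (labelEquiv r hr P),
      Fintype.card_equiv (Fintype.equivFinOfCardEq hcard), hcard]
  simp only [this, Finset.sum_const, Finset.card_univ, smul_eq_mul, Nat.card_eq_fintype_card]
end


section
variable {p m : ℕ}

lemma sum_card_fib (f : Fin p → Fin m) : ∑ j, (fib f j).card = p := by
  classical
  have h := Finset.card_eq_sum_card_fiberwise
    (f := f) (s := (Finset.univ : Finset (Fin p))) (t := Finset.univ) (fun x _ => Finset.mem_univ _)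
  simp only [Finset.card_univ, Fintype.card_fin] at h
  simp only [fib]
  omega

variable (r : ℕ)

lemma card_good_sum (hr : 0 < r) (hp : r * m ≤ p) :
    Fintype.card {f : Fin p → Fin m // ∀ j, r ≤ (fib f j).card} =
      ∑ i ∈ Finset.Nat.antidiagonalTuple m (p - r * m),
        Nat.card {f : Fin p → Fin m // ∀ j, (fib f j).card = r + i j} := by
  classical
  set Ξ : {f : Fin p → Fin m // ∀ j, r ≤ (fib f j).card} →
      {i // i ∈ Finset.Nat.antidiagonalTuple m (p - r * m)} := fun f =>
    ⟨fun j => (fib f.1 j).card - r, by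
      rw [Finset.Nat.mem_antidiagonalTuple]
      have hs : ∑ j, (fib f.1 j).card = p := sum_card_fib f.1
      have h1 : ∑ j, (((fib f.1 j).card - r) + r) = p := by
        rw [Finset.sum_congr rfl fun j _ => Nat.sub_add_cancel (f.2 j)]; exact hs
      rw [Finset.sum_add_distrib, Finset.sum_const, Finset.card_univ, Fintype.card_fin,
        smul_eq_mul] at h1
      have : m * r = r * m := Nat.mul_comm m r
      omega⟩ with hΞ
  rw [Fintype.card_congr (Equiv.sigmaFiberEquiv Ξ).symm, Fintype.card_sigma]
  rw [← Finset.sum_coe_sort (Finset.Nat.antidiagonalTuple m (p - r * m))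
    (fun i => Nat.card {f : Fin p → Fin m // ∀ j, (fib f j).card = r + i j})]
  refine Finset.sum_congr rfl fun i _ => ?_
  have e1 : {f // Ξ f = i} ≃
      {f : {f : Fin p → Fin m // ∀ j, r ≤ (fib f j).card} //
        (fun j => (fib f.1 j).card - r) = i.1} :=
    Equiv.subtypeEquivRight fun f => by
      rw [hΞ]; exact ⟨fun h => congrArg Subtype.val h, fun h => Subtype.ext h⟩
  have e2 := Equiv.subtypeSubtypeEquivSubtypeInter
    (fun f : Fin p → Fin m => ∀ j, r ≤ (fib f j).card)
    (fun f : Fin p → Fin m => (fun j => (fib f j).card - r) = i.1)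
  have e3 : {f : Fin p → Fin m //
      (∀ j, r ≤ (fib f j).card) ∧ (fun j => (fib f j).card - r) = i.1} ≃
      {f : Fin p → Fin m // ∀ j, (fib f j).card = r + i.1 j} :=
    Equiv.subtypeEquivRight fun f => by
      constructor
      · rintro ⟨h1, h2⟩ j
        have : (fib f j).card - r = i.1 j := congrFun h2 j
        have := h1 j
        omega
      · intro h
        refine ⟨fun j => by rw [h j]; exact Nat.le_add_right _ _, funext fun j => ?_⟩
        simp only [h j]
        omega
  rw [Nat.card_eq_fintype_card, Fintype.card_congr ((e1.trans e2).trans e3),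
    ← Nat.card_eq_fintype_card]
end

end AuxStirling

/-- `stirlingAssoc r p m` is the `r`-associated Stirling number of the second kind:
the number of partitions of `{1,…,p}` into exactly `m` parts, each of size at least `r`. -/
noncomputable def stirlingAssoc (r p m : ℕ) : ℕ :=
  Nat.card {P : Finpartition (Finset.univ : Finset (Fin p)) //
    P.parts.card = m ∧ ∀ s ∈ P.parts, r ≤ s.card}

theorem stmt_0 (m r : ℕ) (hm : 0 < m) (hr : 0 < r) (p : ℕ) (hp : r * m ≤ p) :
    (stirlingAssoc r p m : ℝ) =
      (p.factorial : ℝ) / (m.factorial : ℝ) *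
        ∑ i ∈ Finset.Nat.antidiagonalTuple m (p - r * m),
          1 / ∏ j, ((r + i j).factorial : ℝ) := by
  classical
  have hkey : ∀ i ∈ Finset.Nat.antidiagonalTuple m (p - r * m),
      Nat.card {f : Fin p → Fin m // ∀ j, (fib f j).card = r + i j} *
        ∏ j, (r + i j).factorial = p.factorial := by
    intro i hi
    apply card_fixed_fibers
    rw [Finset.Nat.mem_antidiagonalTuple] at hi
    rw [Finset.sum_add_distrib, Finset.sum_const, Finset.card_univ, Fintype.card_fin,
      smul_eq_mul, hi]
    have : m * r = r * m := Nat.mul_comm m r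
    omega
  have hstir : stirlingAssoc r p m = Nat.card (StP r p m) := rfl
  have hnat : stirlingAssoc r p m * m.factorial =
      ∑ i ∈ Finset.Nat.antidiagonalTuple m (p - r * m),
        Nat.card {f : Fin p → Fin m // ∀ j, (fib f j).card = r + i j} := by
    rw [hstir, ← card_good r hr, card_good_sum r hr hp]
  have hmf : (m.factorial : ℝ) ≠ 0 := Nat.cast_ne_zero.2 m.factorial_ne_zero
  have hterm : ∀ i ∈ Finset.Nat.antidiagonalTuple m (p - r * m),
      (Nat.card {f : Fin p → Fin m // ∀ j, (fib f j).card = r + i j} : ℝ) =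
        (p.factorial : ℝ) / ∏ j, ((r + i j).factorial : ℝ) := by
    intro i hi
    have hprod : (∏ j, ((r + i j).factorial : ℝ)) ≠ 0 := by positivity
    rw [eq_div_iff hprod]
    have h := congrArg (Nat.cast (R := ℝ)) (hkey i hi)
    push_cast at h
    exact h
  have h2 : (stirlingAssoc r p m : ℝ) * m.factorial =
      ∑ i ∈ Finset.Nat.antidiagonalTuple m (p - r * m),
        (p.factorial : ℝ) / ∏ j, ((r + i j).factorial : ℝ) := by
    rw [← Finset.sum_congr rfl hterm]
    have h := congrArg (Nat.cast (R := ℝ)) hnat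
    push_cast at h
    exact h
  have h3 : (stirlingAssoc r p m : ℝ) =
      (∑ i ∈ Finset.Nat.antidiagonalTuple m (p - r * m),
        (p.factorial : ℝ) / ∏ j, ((r + i j).factorial : ℝ)) / m.factorial := by
    rw [eq_div_iff hmf]; exact h2
  rw [h3, Finset.sum_div, Finset.mul_sum]
  refine Finset.sum_congr rfl fun i _ => ?_
  ring
end

section
/- Let k ≥ 2 be an integer, let a ∈ (0,1), and set c = (a^{k−1}(ak − a − k) + 1)/(1−a)². Define f(x) = a^k + k·a^{k−1}(x−a) + c·(x−a)². Then f(x) ≥ x^k for all x ∈ [0,1]. -/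
lemma taylor_ident (a x : ℝ) (m : ℕ) :
    x ^ (m + 2) = a ^ (m + 2) + ((m : ℝ) + 2) * a ^ (m + 1) * (x - a) +
      (x - a) ^ 2 * ∑ i ∈ Finset.range (m + 1), ((i : ℝ) + 1) * a ^ i * x ^ (m - i) := by
  induction m with
  | zero => simp; ring
  | succ m ih =>
    rw [Finset.sum_range_succ]
    have hs : ∑ i ∈ Finset.range (m + 1), ((i : ℝ) + 1) * a ^ i * x ^ (m + 1 - i)
        = x * ∑ i ∈ Finset.range (m + 1), ((i : ℝ) + 1) * a ^ i * x ^ (m - i) := by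
      rw [Finset.mul_sum]
      apply Finset.sum_congr rfl
      intro i hi
      have : m + 1 - i = (m - i) + 1 := by
        have := Finset.mem_range.mp hi; omega
      rw [this, pow_succ]
      ring
    rw [hs]
    have hx : x ^ (m + 1 + 2) = x * x ^ (m + 2) := by ring
    rw [hx, ih]
    simp only [Nat.sub_self, pow_zero]
    push_cast
    ring

theorem stmt_2 (k : ℕ) (hk : 2 ≤ k) (a : ℝ) (ha : a ∈ Set.Ioo (0 : ℝ) 1) :
    ∀ x ∈ Set.Icc (0 : ℝ) 1,
      x ^ k ≤
        a ^ k + (k : ℝ) * a ^ (k - 1) * (x - a) +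
          (a ^ (k - 1) * (a * k - a - k) + 1) / (1 - a) ^ 2 * (x - a) ^ 2 := by
  obtain ⟨m, rfl⟩ : ∃ m, k = m + 2 := ⟨k - 2, by omega⟩
  obtain ⟨ha0, ha1⟩ := ha
  intro x hx
  obtain ⟨hx0, hx1⟩ := hx
  set S : ℝ → ℝ := fun y => ∑ i ∈ Finset.range (m + 1), ((i : ℝ) + 1) * a ^ i * y ^ (m - i)
    with hS
  have hne : (1 - a) ^ 2 ≠ 0 := pow_ne_zero 2 (by linarith)
  have h1 : (1 : ℝ) = a ^ (m + 2) + ((m : ℝ) + 2) * a ^ (m + 1) * (1 - a) +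
      (1 - a) ^ 2 * S 1 := by
    have h := taylor_ident a 1 m
    simp only [hS, one_pow, mul_one]
    simpa using h
  have hsub : m + 2 - 1 = m + 1 := by omega
  have hc : (a ^ (m + 2 - 1) * (a * (m + 2 : ℕ) - a - (m + 2 : ℕ)) + 1) / (1 - a) ^ 2
      = S 1 := by
    rw [hsub]
    rw [div_eq_iff hne]
    push_cast
    linear_combination h1
  rw [hc, hsub]
  have hident : x ^ (m + 2) = a ^ (m + 2) + ((m : ℝ) + 2) * a ^ (m + 1) * (x - a) +
      (x - a) ^ 2 * S x := taylor_ident a x m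
  rw [hident]
  push_cast
  have hSx : S x ≤ S 1 := by
    simp only [hS, one_pow, mul_one]
    apply Finset.sum_le_sum
    intro i _
    have h1p : x ^ (m - i) ≤ 1 := pow_le_one₀ hx0 hx1
    have h0 : (0:ℝ) ≤ ((i : ℝ) + 1) * a ^ i := by positivity
    simpa using mul_le_mul_of_nonneg_left h1p h0
  have key : (x - a) ^ 2 * S x ≤ (x - a) ^ 2 * S 1 :=
    mul_le_mul_of_nonneg_left hSx (sq_nonneg _)
  linarith
end

section
/- Let r, m be positive integers and k a natural number. Then m^k/(r+1)^k ≤ M_r(k,m) ≤ m^k/(r+1)^k + m^{k−1} · ((r+1)^k − 1 − k·r) / ((r+1)^k · r · (r+2)). -/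
open MeasureTheory Finset

noncomputable def Spoly (k : ℕ) (t μ : ℝ) : ℝ :=
  ∑ i ∈ Finset.range (k-1), ((k:ℝ)-1-i) * t^i * μ^(k-2-i)

lemma Spoly_coeff_nonneg {k i : ℕ} (hi : i ∈ Finset.range (k-1)) :
    (0:ℝ) ≤ (k:ℝ)-1-i := by
  have h := Finset.mem_range.mp hi
  have hk : i + 2 ≤ k := by omega
  have : (i:ℝ) + 2 ≤ (k:ℝ) := by exact_mod_cast hk
  linarith

lemma Spoly_succ_succ (k : ℕ) (t μ : ℝ) :
    Spoly (k+2) t μ = ((k:ℝ)+1) * μ^k + t * Spoly (k+1) t μ := by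
  unfold Spoly
  have h1 : k + 2 - 1 = (k) + 1 := by omega
  have h2 : k + 1 - 1 = k := by omega
  rw [h1, h2, Finset.sum_range_succ', add_comm]
  rw [Finset.mul_sum]
  congr 1
  · have : k + 2 - 2 - 0 = k := by omega
    rw [this]; push_cast; ring
  · apply Finset.sum_congr rfl
    intro i hi
    have : k + 2 - 2 - (i+1) = k + 1 - 2 - i := by omega
    rw [this]; push_cast; ring

lemma key_identity (k : ℕ) (t μ : ℝ) :
    t^k = μ^k + k * μ^(k-1) * (t-μ) + (t-μ)^2 * Spoly k t μ := by
  induction k with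
  | zero => simp [Spoly]
  | succ k ih =>
    match k, ih with
    | 0, _ => simp [Spoly]
    | (j+1), ih =>
      rw [pow_succ, ih, Spoly_succ_succ]
      simp only [Nat.add_sub_cancel]
      push_cast
      ring

lemma Spoly_nonneg {k : ℕ} {t μ : ℝ} (ht : 0 ≤ t) (hμ : 0 ≤ μ) : 0 ≤ Spoly k t μ := by
  apply Finset.sum_nonneg
  intro i hi
  have := Spoly_coeff_nonneg hi
  positivity

lemma Spoly_mono {k : ℕ} {t t' μ : ℝ} (ht : 0 ≤ t) (htt : t ≤ t') (hμ : 0 ≤ μ) :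
    Spoly k t μ ≤ Spoly k t' μ := by
  apply Finset.sum_le_sum
  intro i hi
  have hc := Spoly_coeff_nonneg hi
  have hp := pow_le_pow_left₀ ht htt i
  have hμp : (0:ℝ) ≤ μ^(k-2-i) := by positivity
  have ht' : (0:ℝ) ≤ t^i := by positivity
  exact mul_le_mul_of_nonneg_right (mul_le_mul_of_nonneg_left hp hc) hμp

lemma Spoly_scale (k : ℕ) (t μ c : ℝ) :
    Spoly (k+2) (c*t) (c*μ) = c^k * Spoly (k+2) t μ := by
  unfold Spoly
  rw [Finset.mul_sum]
  apply Finset.sum_congr rfl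
  intro i hi
  have hik : i ≤ k := by have := Finset.mem_range.mp hi; omega
  have h2 : k + 2 - 2 - i = k - i := by omega
  rw [h2, mul_pow, mul_pow]
  have hcc : c^i * c^(k-i) = c^k := by
    rw [← pow_add]; congr 1; omega
  calc (↑(k + 2) - 1 - ↑i) * (c ^ i * t ^ i) * (c ^ (k - i) * μ ^ (k - i))
      = (c^i * c^(k-i)) * ((↑(k + 2) - 1 - ↑i) * t ^ i * μ ^ (k - i)) := by ring
    _ = c ^ k * ((↑(k + 2) - 1 - ↑i) * t ^ i * μ ^ (k - i)) := by rw [hcc]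

lemma int_sub_pow_Icc (n : ℕ) : ∫ t in Set.Icc (0:ℝ) 1, (1-t)^n = 1/((n:ℝ)+1) := by
  rw [MeasureTheory.integral_Icc_eq_integral_Ioc, ← intervalIntegral.integral_of_le zero_le_one,
    intervalIntegral.integral_comp_sub_left (fun t => t^n) 1]
  simp [integral_pow]

lemma integrableOn_pow (n : ℕ) : IntegrableOn (fun t : ℝ => (1-t)^n) (Set.Icc (0:ℝ) 1) :=
  (Continuous.integrableOn_Icc (by continuity))

lemma int3 (n : ℕ) (a b c : ℝ) :
    ∫ t in Set.Icc (0:ℝ) 1, (a*(1-t)^n + b*(1-t)^(n+1) + c*(1-t)^(n+2))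
      = a/((n:ℝ)+1) + b/((n:ℝ)+2) + c/((n:ℝ)+3) := by
  rw [integral_add, integral_add, integral_const_mul, integral_const_mul, integral_const_mul,
    int_sub_pow_Icc, int_sub_pow_Icc, int_sub_pow_Icc]
  · push_cast; ring
  · exact (integrableOn_pow n).const_mul a
  · exact (integrableOn_pow (n+1)).const_mul b
  · exact ((integrableOn_pow n).const_mul a).add ((integrableOn_pow (n+1)).const_mul b)
  · exact (integrableOn_pow (n+2)).const_mul c

lemma int_g (n : ℕ) :
    ∫ t in Set.Icc (0:ℝ) 1, ((n:ℝ)+1)*(1-t)^n = 1 := by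
  have := int3 n ((n:ℝ)+1) 0 0
  simp only [zero_mul, add_zero, zero_div] at this
  rw [this]
  have : (n:ℝ)+1 ≠ 0 := by positivity
  field_simp

lemma int_B (n : ℕ) :
    ∫ t in Set.Icc (0:ℝ) 1, (t - 1/((n:ℝ)+2)) * (((n:ℝ)+1)*(1-t)^n) = 0 := by
  have hfun : (fun t : ℝ => (t - 1/((n:ℝ)+2)) * (((n:ℝ)+1)*(1-t)^n))
      = fun t : ℝ => (((n:ℝ)+1)*(1 - 1/((n:ℝ)+2)))*(1-t)^n + (-((n:ℝ)+1))*(1-t)^(n+1)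
        + 0*(1-t)^(n+2) := by
    funext t; ring
  rw [hfun, int3]
  have h2 : (n:ℝ)+2 ≠ 0 := by positivity
  field_simp
  ring

lemma int_C (n : ℕ) :
    ∫ t in Set.Icc (0:ℝ) 1, (t - 1/((n:ℝ)+2))^2 * (((n:ℝ)+1)*(1-t)^n)
      = ((n:ℝ)+1)/(((n:ℝ)+2)^2*((n:ℝ)+3)) := by
  have hfun : (fun t : ℝ => (t - 1/((n:ℝ)+2))^2 * (((n:ℝ)+1)*(1-t)^n))
      = fun t : ℝ => (((n:ℝ)+1)*(1 - 1/((n:ℝ)+2))^2)*(1-t)^n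
        + (-2*((n:ℝ)+1)*(1 - 1/((n:ℝ)+2)))*(1-t)^(n+1)
        + (((n:ℝ)+1))*(1-t)^(n+2) := by
    funext t; ring
  rw [hfun, int3]
  have h1 : (n:ℝ)+1 ≠ 0 := by positivity
  have h2 : (n:ℝ)+2 ≠ 0 := by positivity
  have h3 : (n:ℝ)+3 ≠ 0 := by positivity
  field_simp
  ring

lemma prod_icc_integral {m : ℕ} (f : Fin m → ℝ → ℝ) :
    ∫ x in Set.Icc (0 : Fin m → ℝ) 1, ∏ i, f i (x i)
      = ∏ i, ∫ t in Set.Icc (0:ℝ) 1, f i t := by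
  rw [← MeasureTheory.integral_indicator measurableSet_Icc]
  have hmem : ∀ x : Fin m → ℝ, x ∈ Set.Icc (0 : Fin m → ℝ) 1 ↔
      ∀ i, x i ∈ Set.Icc (0:ℝ) 1 := by
    intro x; simp [Set.mem_Icc, Pi.le_def, forall_and]
  have hind : (Set.Icc (0 : Fin m → ℝ) 1).indicator (fun x => ∏ i, f i (x i)) =
      fun x => ∏ i, (Set.Icc (0:ℝ) 1).indicator (f i) (x i) := by
    funext x
    by_cases hx : x ∈ Set.Icc (0 : Fin m → ℝ) 1
    · rw [Set.indicator_of_mem hx]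
      exact Finset.prod_congr rfl fun i _ => (Set.indicator_of_mem ((hmem x).1 hx i) _).symm
    · rw [Set.indicator_of_notMem hx]
      obtain ⟨i, hi⟩ := not_forall.mp (fun h => hx ((hmem x).2 h))
      exact (Finset.prod_eq_zero (Finset.mem_univ i) (Set.indicator_of_notMem hi _)).symm
  rw [hind]
  beta_reduce
  rw [volume_pi, MeasureTheory.integral_fintype_prod_eq_prod (ι := Fin m)
    (fun i => (Set.Icc (0:ℝ) 1).indicator (f i))]
  exact Finset.prod_congr rfl fun i _ => (MeasureTheory.integral_indicator measurableSet_Icc)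

noncomputable def gB (n : ℕ) (t : ℝ) : ℝ := ((n:ℝ)+1)*(1-t)^n
noncomputable def wB (n m : ℕ) (x : Fin m → ℝ) : ℝ := ∏ i, gB n (x i)

lemma gB_cont (n : ℕ) : Continuous (gB n) := by unfold gB; continuity

lemma wB_cont (n m : ℕ) : Continuous (wB n m) :=
  continuous_finset_prod _ fun i _ => (gB_cont n).comp (continuous_apply i)

lemma integrableOn_cube {m : ℕ} {f : (Fin m → ℝ) → ℝ} (hf : Continuous f) :
    IntegrableOn f (Set.Icc (0 : Fin m → ℝ) 1) :=
  hf.continuousOn.integrableOn_compact isCompact_Icc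

lemma cube0 (n m : ℕ) : ∫ x in Set.Icc (0 : Fin m → ℝ) 1, wB n m x = 1 := by
  unfold wB
  rw [prod_icc_integral (fun _ => gB n)]
  simp [gB, int_g n]

lemma cube1 (n m : ℕ) (i : Fin m) :
    ∫ x in Set.Icc (0 : Fin m → ℝ) 1, (x i - 1/((n:ℝ)+2)) * wB n m x = 0 := by
  have key := prod_icc_integral (m := m)
    (fun j t => (if j = i then (t - 1/((n:ℝ)+2)) else 1) * gB n t)
  have hfun : (fun x : Fin m → ℝ => (x i - 1/((n:ℝ)+2)) * wB n m x)
      = fun x => ∏ j, (if j = i then (x j - 1/((n:ℝ)+2)) else 1) * gB n (x j) := by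
    funext x
    simp only [wB]
    rw [Finset.prod_mul_distrib, Finset.prod_ite_eq' Finset.univ i
      (fun j => x j - 1/((n:ℝ)+2))]
    simp
  rw [hfun, key]
  apply Finset.prod_eq_zero (Finset.mem_univ i)
  simp only [if_pos rfl]
  exact int_B n

lemma cube2 (n m : ℕ) (i j : Fin m) (hij : i ≠ j) :
    ∫ x in Set.Icc (0 : Fin m → ℝ) 1,
      (x i - 1/((n:ℝ)+2)) * (x j - 1/((n:ℝ)+2)) * wB n m x = 0 := by
  have key := prod_icc_integral (m := m)
    (fun l t => (if l = i then (t - 1/((n:ℝ)+2)) else 1) *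
          ((if l = j then (t - 1/((n:ℝ)+2)) else 1) * gB n t))
  have hfun : (fun x : Fin m → ℝ =>
        (x i - 1/((n:ℝ)+2)) * (x j - 1/((n:ℝ)+2)) * wB n m x)
      = fun x => ∏ l, (if l = i then (x l - 1/((n:ℝ)+2)) else 1) *
          ((if l = j then (x l - 1/((n:ℝ)+2)) else 1) * gB n (x l)) := by
    funext x
    simp only [wB, ← mul_assoc]
    rw [Finset.prod_mul_distrib, Finset.prod_mul_distrib,
      Finset.prod_ite_eq' Finset.univ i (fun l => x l - 1/((n:ℝ)+2)),
      Finset.prod_ite_eq' Finset.univ j (fun l => x l - 1/((n:ℝ)+2))]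
    simp
  rw [hfun, key]
  apply Finset.prod_eq_zero (Finset.mem_univ i)
  simp only [if_pos rfl, if_neg hij]
  simpa [gB] using int_B n

lemma cube2d (n m : ℕ) (i : Fin m) :
    ∫ x in Set.Icc (0 : Fin m → ℝ) 1,
      (x i - 1/((n:ℝ)+2)) * (x i - 1/((n:ℝ)+2)) * wB n m x
      = ((n:ℝ)+1)/(((n:ℝ)+2)^2*((n:ℝ)+3)) := by
  have key := prod_icc_integral (m := m)
    (fun l t => (if l = i then (t - 1/((n:ℝ)+2))*(t - 1/((n:ℝ)+2)) else 1) * gB n t)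
  have hfun : (fun x : Fin m → ℝ =>
        (x i - 1/((n:ℝ)+2)) * (x i - 1/((n:ℝ)+2)) * wB n m x)
      = fun x => ∏ l, (if l = i then (x l - 1/((n:ℝ)+2))*(x l - 1/((n:ℝ)+2)) else 1) *
          gB n (x l) := by
    funext x
    simp only [wB]
    rw [Finset.prod_mul_distrib,
      Finset.prod_ite_eq' Finset.univ i (fun l => (x l - 1/((n:ℝ)+2))*(x l - 1/((n:ℝ)+2)))]
    simp [mul_assoc]
  rw [hfun, key]
  have heval : ∀ l : Fin m, (∫ t in Set.Icc (0:ℝ) 1,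
      (if l = i then (t - 1/((n:ℝ)+2))*(t - 1/((n:ℝ)+2)) else 1) * gB n t)
      = if l = i then ((n:ℝ)+1)/(((n:ℝ)+2)^2*((n:ℝ)+3)) else 1 := by
    intro l
    by_cases h : l = i
    · simp only [if_pos h]
      rw [← int_C n]
      apply MeasureTheory.setIntegral_congr_fun measurableSet_Icc
      intro t _
      simp only [gB]
      ring
    · simp only [if_neg h, one_mul]
      simpa [gB] using int_g n
  rw [Finset.prod_congr rfl (fun l _ => heval l)]
  rw [Finset.prod_ite_eq' Finset.univ i (fun _ => ((n:ℝ)+1)/(((n:ℝ)+2)^2*((n:ℝ)+3)))]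
  simp

lemma scont {m : ℕ} : Continuous (fun x : Fin m → ℝ => ∑ i, x i) :=
  continuous_finset_sum _ fun i _ => continuous_apply i

lemma cubeS1 (n m : ℕ) :
    ∫ x in Set.Icc (0 : Fin m → ℝ) 1, (∑ i, x i - m * (1/((n:ℝ)+2))) * wB n m x = 0 := by
  have hfun : (fun x : Fin m → ℝ => (∑ i, x i - m * (1/((n:ℝ)+2))) * wB n m x)
      = fun x => ∑ i, (x i - 1/((n:ℝ)+2)) * wB n m x := by
    funext x
    rw [← Finset.sum_mul]
    congr 1
    rw [Finset.sum_sub_distrib]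
    simp [mul_comm]
  rw [hfun, integral_finset_sum]
  · exact Finset.sum_eq_zero fun i _ => cube1 n m i
  · intro i _
    exact integrableOn_cube (((continuous_apply i).sub continuous_const).mul (wB_cont n m))

lemma cubeS2 (n m : ℕ) :
    ∫ x in Set.Icc (0 : Fin m → ℝ) 1, (∑ i, x i - m * (1/((n:ℝ)+2)))^2 * wB n m x
      = m * (((n:ℝ)+1)/(((n:ℝ)+2)^2*((n:ℝ)+3))) := by
  have hfun : (fun x : Fin m → ℝ => (∑ i, x i - m * (1/((n:ℝ)+2)))^2 * wB n m x)
      = fun x => ∑ i, ∑ j, (x i - 1/((n:ℝ)+2)) * (x j - 1/((n:ℝ)+2)) * wB n m x := by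
    funext x
    have h1 : (∑ i, x i) - m * (1/((n:ℝ)+2)) = ∑ i, (x i - 1/((n:ℝ)+2)) := by
      rw [Finset.sum_sub_distrib]; simp [mul_comm]
    rw [h1, sq, Finset.sum_mul_sum, Finset.sum_mul]
    congr 1; funext i
    rw [Finset.sum_mul]
  rw [hfun, integral_finset_sum]
  · have : ∀ i : Fin m, (∫ x in Set.Icc (0 : Fin m → ℝ) 1,
        ∑ j, (x i - 1/((n:ℝ)+2)) * (x j - 1/((n:ℝ)+2)) * wB n m x)
        = ((n:ℝ)+1)/(((n:ℝ)+2)^2*((n:ℝ)+3)) := by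
      intro i
      rw [integral_finset_sum]
      · rw [Finset.sum_eq_single i]
        · exact cube2d n m i
        · intro j _ hj
          exact cube2 n m i j (Ne.symm hj)
        · simp
      · intro j _
        exact integrableOn_cube ((((continuous_apply i).sub continuous_const).mul
          ((continuous_apply j).sub continuous_const)).mul (wB_cont n m))
    rw [Finset.sum_congr rfl (fun i _ => this i)]
    simp [mul_comm]
  · intro i _
    apply integrableOn_cube
    apply continuous_finset_sum
    intro j _
    exact (((continuous_apply i).sub continuous_const).mul
      ((continuous_apply j).sub continuous_const)).mul (wB_cont n m)

open MeasureTheory in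
/-- `momentM r m k` is the `k`-th moment of the sum of `m` i.i.d. Beta(1,r) random
variables, written as an integral over the cube `[0,1]^m`. -/
noncomputable def momentM (r m k : ℕ) : ℝ :=
  ∫ x in Set.Icc (0 : Fin m → ℝ) 1,
    (∑ i, x i) ^ k * ∏ i, (r : ℝ) * (1 - x i) ^ (r - 1)

theorem stmt_3 (r m : ℕ) (hr : 0 < r) (hm : 0 < m) (k : ℕ) :
    (m : ℝ) ^ k / ((r : ℝ) + 1) ^ k ≤ momentM r m k ∧
      momentM r m k ≤
        (m : ℝ) ^ k / ((r : ℝ) + 1) ^ k +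
          (m : ℝ) ^ ((k : ℤ) - 1) *
            ((((r : ℝ) + 1) ^ k - 1 - (k : ℝ) * r) /
              (((r : ℝ) + 1) ^ k * r * ((r : ℝ) + 2))) := by
  obtain ⟨n, rfl⟩ : ∃ n, r = n + 1 := ⟨r - 1, by omega⟩
  set μ : ℝ := 1/((n:ℝ)+2) with hμdef
  set c : ℝ := m * μ with hcdef
  have hμ0 : 0 ≤ μ := by rw [hμdef]; positivity
  have hc0 : 0 ≤ c := by rw [hcdef]; positivity
  have hmom : momentM (n+1) m k
      = ∫ x in Set.Icc (0 : Fin m → ℝ) 1, (∑ i, x i)^k * wB n m x := by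
    unfold momentM wB gB
    norm_num
  -- pointwise facts
  have hpt : ∀ x ∈ Set.Icc (0 : Fin m → ℝ) 1,
      (0 ≤ ∑ i, x i) ∧ (∑ i, x i ≤ m) ∧ 0 ≤ wB n m x := by
    intro x hx
    rw [Set.mem_Icc] at hx
    have h0 : ∀ i, 0 ≤ x i := fun i => hx.1 i
    have h1 : ∀ i, x i ≤ 1 := fun i => hx.2 i
    refine ⟨Finset.sum_nonneg fun i _ => h0 i, ?_, ?_⟩
    · calc ∑ i, x i ≤ ∑ _i : Fin m, (1:ℝ) := Finset.sum_le_sum fun i _ => h1 i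
        _ = m := by simp
    · exact Finset.prod_nonneg fun i _ => by
        unfold gB
        have h : (0:ℝ) <= 1 - x i := by linarith [h1 i]
        positivity
  have hint_main : IntegrableOn (fun x : Fin m → ℝ => (∑ i, x i)^k * wB n m x)
      (Set.Icc (0 : Fin m → ℝ) 1) :=
    integrableOn_cube ((scont.pow k).mul (wB_cont n m))
  have hint_lin : IntegrableOn (fun x : Fin m → ℝ =>
      (c^k + k*c^(k-1)*(∑ i, x i - c)) * wB n m x) (Set.Icc (0 : Fin m → ℝ) 1) :=
    integrableOn_cube (((continuous_const.add
      (continuous_const.mul (scont.sub continuous_const)))).mul (wB_cont n m))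
  have hIlin : ∫ x in Set.Icc (0 : Fin m → ℝ) 1,
      (c^k + k*c^(k-1)*(∑ i, x i - c)) * wB n m x = c^k := by
    have hfun : (fun x : Fin m → ℝ => (c^k + k*c^(k-1)*(∑ i, x i - c)) * wB n m x)
        = fun x => c^k * wB n m x
          + (k*c^(k-1)) * ((∑ i, x i - m * μ) * wB n m x) := by
      funext x; rw [hcdef]; ring
    rw [hfun, integral_add, integral_const_mul, integral_const_mul, cube0, cubeS1]
    · ring
    · exact (integrableOn_cube (wB_cont n m)).const_mul _
    · exact (integrableOn_cube ((scont.sub continuous_const).mul (wB_cont n m))).const_mul _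
  have hcpow : c^k = (m:ℝ)^k / ((n:ℝ)+2)^k := by
    rw [hcdef, hμdef, mul_one_div, div_pow]
  have hR : ((n+1:ℕ):ℝ) + 1 = (n:ℝ)+2 := by push_cast; ring
  constructor
  · -- lower bound
    rw [hmom, hR, ← hcpow]
    rw [← hIlin]
    apply setIntegral_mono_on hint_lin hint_main measurableSet_Icc
    intro x hx
    obtain ⟨hs0, hsm, hw0⟩ := hpt x hx
    apply mul_le_mul_of_nonneg_right _ hw0
    rw [key_identity k (∑ i, x i) c]
    have := Spoly_nonneg (k := k) hs0 hc0 (μ := c)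
    nlinarith [sq_nonneg (∑ i, x i - c)]
  · -- upper bound
    set D : ℝ := Spoly k (m:ℝ) c with hDdef
    have hint_quad : IntegrableOn (fun x : Fin m → ℝ =>
        (c^k + k*c^(k-1)*(∑ i, x i - c) + D * (∑ i, x i - c)^2) * wB n m x)
        (Set.Icc (0 : Fin m → ℝ) 1) :=
      integrableOn_cube ((((continuous_const.add
        (continuous_const.mul (scont.sub continuous_const))).add
        (continuous_const.mul ((scont.sub continuous_const).pow 2))).mul (wB_cont n m)))
    have hIquad : ∫ x in Set.Icc (0 : Fin m → ℝ) 1,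
        (c^k + k*c^(k-1)*(∑ i, x i - c) + D * (∑ i, x i - c)^2) * wB n m x
        = c^k + D * (m * (((n:ℝ)+1)/(((n:ℝ)+2)^2*((n:ℝ)+3)))) := by
      have hfun : (fun x : Fin m → ℝ =>
          (c^k + k*c^(k-1)*(∑ i, x i - c) + D * (∑ i, x i - c)^2) * wB n m x)
          = fun x => (c^k + k*c^(k-1)*(∑ i, x i - c)) * wB n m x
            + D * ((∑ i, x i - m * μ)^2 * wB n m x) := by
        funext x; rw [hcdef]; ring
      rw [hfun, integral_add hint_lin, integral_const_mul, hIlin, cubeS2]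
      exact (integrableOn_cube (((scont.sub continuous_const).pow 2).mul
        (wB_cont n m))).const_mul _
    have hstep : momentM (n+1) m k ≤ c^k + D * (m * (((n:ℝ)+1)/(((n:ℝ)+2)^2*((n:ℝ)+3)))) := by
      rw [hmom, ← hIquad]
      apply setIntegral_mono_on hint_main hint_quad measurableSet_Icc
      intro x hx
      obtain ⟨hs0, hsm, hw0⟩ := hpt x hx
      apply mul_le_mul_of_nonneg_right _ hw0
      rw [key_identity k (∑ i, x i) c]
      have hmono := Spoly_mono (k := k) hs0 hsm hc0 (μ := c)
      rw [← hDdef] at hmono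
      nlinarith [sq_nonneg (∑ i, x i - c)]
    refine hstep.trans_eq ?_
    rw [hR, ← hcpow]
    -- remains: algebraic identity
    congr 1
    match k with
    | 0 =>
      simp [hDdef, Spoly]
    | 1 =>
      have h1 : Spoly 1 (m:ℝ) c = 0 := by simp [Spoly]
      rw [hDdef, h1, zero_mul]
      push_cast
      rw [show ((n:ℝ)+2)^1 - 1 - 1*((n:ℝ)+1) = 0 from by ring, zero_div, mul_zero]
    | (j+2) =>
      have hN : ((n:ℝ)+2) ≠ 0 := by positivity
      have hn1 : ((n:ℝ)+1) ≠ 0 := by positivity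
      have hn3 : ((n:ℝ)+3) ≠ 0 := by positivity
      have hD2 : D = ((m:ℝ)/((n:ℝ)+2))^j * Spoly (j+2) ((n:ℝ)+2) 1 := by
        have h := Spoly_scale j ((n:ℝ)+2) 1 ((m:ℝ)/((n:ℝ)+2))
        rw [div_mul_cancel₀ _ hN, mul_one] at h
        rw [hDdef, hcdef, hμdef, show (m:ℝ) * (1/((n:ℝ)+2)) = (m:ℝ)/((n:ℝ)+2) from by ring]
        exact h
      have hkey : ((n:ℝ)+1)^2 * Spoly (j+2) ((n:ℝ)+2) 1
          = ((n:ℝ)+2)^(j+2) - 1 - ((j:ℝ)+2)*((n:ℝ)+1) := by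
        have hid := key_identity (j+2) ((n:ℝ)+2) 1
        simp only [Nat.add_sub_cancel, one_pow, mul_one] at hid
        push_cast at hid
        linear_combination (-1 : ℝ) * hid
      have hzp : (m:ℝ)^(((j+2:ℕ):ℤ)-1) = (m:ℝ)^(j+1) := by
        rw [show ((j+2:ℕ):ℤ)-1 = ((j+1:ℕ):ℤ) from by push_cast; ring, zpow_natCast]
      rw [hD2, hzp]
      push_cast
      rw [show ((n:ℝ)+2)^(j+2) - 1 - ((j:ℝ)+2)*((n:ℝ)+1)
          = ((n:ℝ)+1)^2 * Spoly (j+2) ((n:ℝ)+2) 1 from hkey.symm]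
      simp only [div_pow]
      field_simp
      ring
end

section
/- Let r, m be positive integers. Then the m-fold convolution g_r^{*m} of g_r with itself satisfies g_r^{*m}(x) ≤ ((r!)^m/(mr−1)!) · (m−x)^{mr−1} for all x ∈ [0,m]. -/
/-- density of the Beta(1,r) distribution: `r (1-x)^(r-1)` on `[0,1]`, `0` elsewhere. -/
noncomputable def gdens (r : ℕ) : ℝ → ℝ :=
  fun x => if x ∈ Set.Icc (0 : ℝ) 1 then (r : ℝ) * (1 - x) ^ (r - 1) else 0

open MeasureTheory in
/-- `iterConv f m` is the `m`-fold convolution `f^{*m}`: `f^{*1} = f` and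
`f^{*(m+1)}(x) = ∫ t, f^{*m}(x - t) * f t` (junk value `0` at `m = 0`). -/
noncomputable def iterConv (f : ℝ → ℝ) : ℕ → ℝ → ℝ
  | 0 => fun _ => 0
  | 1 => f
  | (n+2) => fun x => ∫ t : ℝ, iterConv f (n+1) (x - t) * f t


section Aux
open intervalIntegral MeasureTheory

lemma beta_nat (a b : ℕ) :
    ∫ x in (0:ℝ)..1, x ^ a * (1 - x) ^ b
      = (a.factorial * b.factorial : ℝ) / ((a + b + 1).factorial) := by
  induction b generalizing a with
  | zero =>
    simp only [pow_zero, mul_one, integral_pow]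
    rw [Nat.add_zero, Nat.factorial_succ, Nat.factorial_zero]
    push_cast
    rw [one_pow, zero_pow (by omega), sub_zero]
    field_simp
  | succ b ih =>
    have hu : ∀ x ∈ Set.uIcc (0:ℝ) 1,
        HasDerivAt (fun x : ℝ => (1 - x) ^ (b+1))
          (-((b+1 : ℝ) * (1 - x) ^ b)) x := by
      intro x _
      have h := ((hasDerivAt_id x).const_sub 1).pow (b+1)
      refine h.congr_deriv ?_
      simp only [id_eq]
      push_cast
      ring
    have hv : ∀ x ∈ Set.uIcc (0:ℝ) 1,
        HasDerivAt (fun x : ℝ => x ^ (a+1) / (a+1)) (x ^ a) x := by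
      intro x _
      have h := (hasDerivAt_pow (a+1) x).div_const (a+1)
      refine h.congr_deriv ?_
      field_simp
      simp
    have hparts := intervalIntegral.integral_mul_deriv_eq_deriv_mul hu hv
      (by apply Continuous.intervalIntegrable; continuity)
      (by apply Continuous.intervalIntegrable; continuity)
    have h1 : ∫ x in (0:ℝ)..1, x ^ a * (1 - x) ^ (b+1)
        = ∫ x in (0:ℝ)..1, (1 - x) ^ (b+1) * x ^ a := by
      apply intervalIntegral.integral_congr; intro x _; ring
    rw [h1, hparts]
    have h2 : ∫ x in (0:ℝ)..1, -((b+1 : ℝ) * (1 - x) ^ b) * (x ^ (a+1) / (a+1))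
        = -((b+1 : ℝ)/(a+1)) * ∫ x in (0:ℝ)..1, x ^ (a+1) * (1 - x) ^ b := by
      rw [← intervalIntegral.integral_const_mul]
      apply intervalIntegral.integral_congr; intro x _; ring
    rw [h2, ih (a+1)]
    have h3 : ((a+1) + b + 1) = a + (b+1) + 1 := by ring
    rw [h3]
    have hf : ((a + (b+1) + 1).factorial : ℝ) ≠ 0 := by positivity
    have e1 : ((a+1).factorial : ℝ) = (a+1) * a.factorial := by
      rw [Nat.factorial_succ]; push_cast; ring
    have e2 : ((b+1).factorial : ℝ) = (b+1) * b.factorial := by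
      rw [Nat.factorial_succ]; push_cast; ring
    rw [e1, e2]
    have ha1 : (a : ℝ) + 1 ≠ 0 := by positivity
    field_simp
    ring

lemma beta_scaled (a b : ℕ) {L : ℝ} (hL : 0 ≤ L) :
    ∫ s in (0:ℝ)..L, s ^ a * (L - s) ^ b
      = L ^ (a + b + 1) * ((a.factorial * b.factorial : ℝ) / ((a + b + 1).factorial)) := by
  rcases eq_or_lt_of_le hL with h0 | h0
  · simp [← h0]
  · have key := intervalIntegral.smul_integral_comp_mul_right
      (fun s => s ^ a * (L - s) ^ b) (a := 0) (b := 1) L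
    simp only [zero_mul, one_mul, smul_eq_mul] at key
    rw [← key]
    have hcong : ∫ x in (0:ℝ)..1, (x * L) ^ a * (L - x * L) ^ b
        = ∫ x in (0:ℝ)..1, L ^ (a + b) * (x ^ a * (1 - x) ^ b) := by
      apply intervalIntegral.integral_congr
      intro x _
      simp only []
      have h : L - x * L = L * (1 - x) := by ring
      rw [h, mul_pow, mul_pow, pow_add]
      ring
    rw [hcong, intervalIntegral.integral_const_mul, beta_nat]
    ring

lemma gdens_meas (r : ℕ) : Measurable (gdens r) := by
  unfold gdens
  exact Measurable.ite measurableSet_Icc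
    (measurable_const.mul ((measurable_const.sub measurable_id).pow_const _)) measurable_const

lemma gdens_nonneg (r : ℕ) (x : ℝ) : 0 ≤ gdens r x := by
  unfold gdens
  split
  · rename_i h
    have h2 : (0:ℝ) ≤ 1 - x := by linarith [h.2]
    exact mul_nonneg (Nat.cast_nonneg r) (pow_nonneg h2 _)
  · exact le_refl 0

lemma main_bound (r : ℕ) (hr : 0 < r) : ∀ m : ℕ, 0 < m →
    Measurable (iterConv (gdens r) m) ∧
    (∀ y, 0 ≤ iterConv (gdens r) m y) ∧
    (∀ y, iterConv (gdens r) m y ≤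
      Set.indicator (Set.Icc (0:ℝ) (m:ℝ))
        (fun y => (r.factorial : ℝ) ^ m / ((m * r - 1).factorial : ℝ)
          * ((m : ℝ) - y) ^ (m * r - 1)) y) := by
  intro m
  induction m with
  | zero => omega
  | succ n ih =>
    intro _
    rcases Nat.eq_zero_or_pos n with hn | hn
    · -- base case m = 1
      subst hn
      have h1 : iterConv (gdens r) 1 = gdens r := rfl
      refine ⟨h1 ▸ gdens_meas r, fun y => h1 ▸ gdens_nonneg r y, fun y => ?_⟩
      rw [h1]
      have hrf : r.factorial = r * (r - 1).factorial := by
        nth_rewrite 1 [show r = (r - 1) + 1 by omega]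
        rw [Nat.factorial_succ]
        congr 1
        omega
      have hfac : (r.factorial : ℝ) ^ 1 / (((1 * r - 1).factorial : ℝ)) = r := by
        rw [pow_one, one_mul, hrf]
        have hne : ((r - 1).factorial : ℝ) ≠ 0 := by positivity
        push_cast
        field_simp
      have hgoal : ((0:ℕ)+1 : ℕ) * r - 1 = r - 1 := by omega
      simp only [hgoal, Nat.cast_ofNat, Nat.cast_one, pow_one, Nat.zero_add, Nat.cast_succ,
        Nat.cast_zero, zero_add]
      by_cases hy : y ∈ Set.Icc (0:ℝ) 1
      · rw [Set.indicator_of_mem hy]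
        unfold gdens
        rw [if_pos hy]
        have hne : ((r - 1).factorial : ℝ) ≠ 0 := by positivity
        rw [hrf]
        push_cast
        rw [mul_div_assoc, div_self hne, mul_one]
      · rw [Set.indicator_of_notMem hy]
        unfold gdens
        rw [if_neg hy]
    · -- inductive step: n ≥ 1
      obtain ⟨Fmeas, Fnn, Fbd⟩ := ih hn
      have hconv : iterConv (gdens r) (n+1)
          = fun x => ∫ t : ℝ, iterConv (gdens r) n (x - t) * gdens r t := by
        obtain ⟨k, hk⟩ : ∃ k, n = k + 1 := ⟨n - 1, by omega⟩
        subst hk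
        rfl
      set F := iterConv (gdens r) n with hFdef
      set g := gdens r with hgdef
      have measN1 : Measurable (iterConv (gdens r) (n+1)) := by
        rw [hconv]
        have hjoint : Measurable (fun z : ℝ × ℝ => F (z.1 - z.2) * g z.2) :=
          (Fmeas.comp (measurable_fst.sub measurable_snd)).mul
            ((gdens_meas r).comp measurable_snd)
        exact (hjoint.stronglyMeasurable.integral_prod_right' (ν := MeasureTheory.volume)).measurable
      have nn : ∀ y, 0 ≤ iterConv (gdens r) (n+1) y := by
        rw [hconv]
        intro y
        exact MeasureTheory.integral_nonneg fun t => mul_nonneg (Fnn _) (gdens_nonneg r _)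
      refine ⟨measN1, nn, fun x => ?_⟩
      set p := n * r - 1 with hp
      set q := r - 1 with hq
      have hpq : p + q + 1 = (n+1) * r - 1 := by
        have h1 : 1 ≤ n * r := Nat.one_le_iff_ne_zero.mpr (by positivity)
        have h2 : (n + 1) * r = n * r + r := by ring
        omega
      set C : ℝ := (r.factorial : ℝ) ^ n / ((n * r - 1).factorial : ℝ) with hC
      have hC0 : 0 ≤ C := by positivity
      by_cases hx : x ∈ Set.Icc (0:ℝ) ((n:ℝ)+1)
      · -- main case
        obtain ⟨hx0, hx1⟩ := hx
        set L : ℝ := (n:ℝ) + 1 - x with hL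
        have hL0 : 0 ≤ L := by simp only [hL]; linarith
        set h : ℝ → ℝ := (Set.Icc (x - n) 1).indicator
          (fun t => C * ((n:ℝ) - (x - t)) ^ p * ((r:ℝ) * (1 - t) ^ q)) with hh
        have hnnh : ∀ t, 0 ≤ h t := by
          intro t
          rw [hh]
          by_cases ht : t ∈ Set.Icc (x - (n:ℝ)) 1
          · rw [Set.indicator_of_mem ht]
            obtain ⟨ht1, ht2⟩ := ht
            have e1 : (0:ℝ) ≤ (n:ℝ) - (x - t) := by linarith
            have e2 : (0:ℝ) ≤ 1 - t := by linarith
            have := pow_nonneg e1 p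
            have := pow_nonneg e2 q
            positivity
          · rw [Set.indicator_of_notMem ht]
        have hle : ∀ t, F (x - t) * g t ≤ h t := by
          intro t
          by_cases ht : t ∈ Set.Icc (x - (n:ℝ)) 1
          · by_cases hgt : t ∈ Set.Icc (0:ℝ) 1
            · -- g t = r (1-t)^q ; bound F
              have hgval : g t = (r:ℝ) * (1 - t) ^ q := by
                rw [hgdef]
                unfold gdens
                rw [if_pos hgt]
              have hFb : F (x - t) ≤ C * ((n:ℝ) - (x - t)) ^ p := by
                have h0 := Fbd (x - t)
                by_cases hxt : (x - t) ∈ Set.Icc (0:ℝ) (n:ℝ)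
                · rw [Set.indicator_of_mem hxt] at h0
                  exact h0
                · rw [Set.indicator_of_notMem hxt] at h0
                  have hF0 : F (x - t) = 0 := le_antisymm h0 (Fnn _)
                  rw [hF0]
                  have e1 : (0:ℝ) ≤ (n:ℝ) - (x - t) := by linarith [ht.1]
                  have := pow_nonneg e1 p
                  positivity
              have hgnn : 0 ≤ g t := gdens_nonneg r t
              have hCb : 0 ≤ C * ((n:ℝ) - (x - t)) ^ p := le_trans (Fnn _) hFb
              calc F (x - t) * g t ≤ (C * ((n:ℝ) - (x - t)) ^ p) * g t :=
                    mul_le_mul_of_nonneg_right hFb hgnn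
                _ = h t := by rw [hh, Set.indicator_of_mem ht, hgval]
            · have : g t = 0 := by
                rw [hgdef]; unfold gdens; rw [if_neg hgt]
              rw [this, mul_zero]
              exact hnnh t
          · -- t ∉ [x-n, 1] : product is 0
            have hts : t < x - n ∨ 1 < t := by
              by_contra hcon
              push_neg at hcon
              exact ht ⟨hcon.1, hcon.2⟩
            have hzero : F (x - t) * g t = 0 := by
              rcases hts with h1 | h1
              · have hxt : (x - t) ∉ Set.Icc (0:ℝ) (n:ℝ) := by
                  intro hmem
                  have := hmem.2
                  linarith
                have h0 := Fbd (x - t)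
                rw [Set.indicator_of_notMem hxt] at h0
                have : F (x - t) = 0 := le_antisymm h0 (Fnn _)
                rw [this, zero_mul]
              · have : g t = 0 := by
                  rw [hgdef]; unfold gdens
                  rw [if_neg (by intro hmem; linarith [hmem.2])]
                rw [this, mul_zero]
            rw [hzero]
            exact hnnh t
        have hconth : Continuous (fun t : ℝ => C * ((n:ℝ) - (x - t)) ^ p * ((r:ℝ) * (1 - t) ^ q)) := by
          fun_prop
        have hInth : MeasureTheory.Integrable h := by
          rw [hh]
          exact (hconth.integrableOn_Icc).integrable_indicator measurableSet_Icc
        have hmeasf : Measurable (fun t => F (x - t) * g t) :=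
          (Fmeas.comp (measurable_const.sub measurable_id)).mul (gdens_meas r)
        have hIntf : MeasureTheory.Integrable (fun t => F (x - t) * g t) := by
          apply hInth.mono' hmeasf.aestronglyMeasurable
          apply MeasureTheory.ae_of_all
          intro t
          rw [Real.norm_eq_abs, abs_of_nonneg (mul_nonneg (Fnn _) (gdens_nonneg r _))]
          exact hle t
        have hmono : iterConv (gdens r) (n+1) x ≤ ∫ t : ℝ, h t := by
          rw [hconv]
          exact MeasureTheory.integral_mono hIntf hInth hle
        -- compute ∫ h
        have hxm : x - (n:ℝ) ≤ 1 := by linarith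
        have hcalc : ∫ t : ℝ, h t
            = C * r * (L ^ (p + q + 1) * ((p.factorial * q.factorial : ℝ) / ((p + q + 1).factorial))) := by
          rw [hh, MeasureTheory.integral_indicator measurableSet_Icc,
            MeasureTheory.integral_Icc_eq_integral_Ioc,
            ← intervalIntegral.integral_of_le hxm]
          have hcong : ∫ t in (x - (n:ℝ))..1, C * ((n:ℝ) - (x - t)) ^ p * ((r:ℝ) * (1 - t) ^ q)
              = ∫ t in (x - (n:ℝ))..1, (C * r) *
                  ((fun s => s ^ p * (L - s) ^ q) (t - (x - (n:ℝ)))) := by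
            apply intervalIntegral.integral_congr
            intro t _
            simp only [hL]
            have e1 : (n:ℝ) - (x - t) = t - (x - (n:ℝ)) := by ring
            have e2 : 1 - t = ((n:ℝ) + 1 - x) - (t - (x - (n:ℝ))) := by ring
            rw [e1, e2]
            ring
          rw [hcong, intervalIntegral.integral_const_mul,
            intervalIntegral.integral_comp_sub_right (fun s => s ^ p * (L - s) ^ q) (x - (n:ℝ))]
          have e3 : x - (n:ℝ) - (x - (n:ℝ)) = 0 := by ring
          have e4 : 1 - (x - (n:ℝ)) = L := by rw [hL]; ring
          rw [e3, e4, beta_scaled p q hL0]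
        -- final algebra
        have hrfn : r.factorial = r * q.factorial := by
          rw [hq]
          nth_rewrite 1 [show r = (r - 1) + 1 by omega]
          rw [Nat.factorial_succ]
          congr 1
          omega
        have hrf : (r.factorial : ℝ) = (r:ℝ) * (q.factorial : ℝ) := by exact_mod_cast hrfn
        have hfinal : C * r * (L ^ (p + q + 1) * ((p.factorial * q.factorial : ℝ) / ((p + q + 1).factorial)))
            = (r.factorial : ℝ) ^ (n+1) / (((n+1) * r - 1).factorial : ℝ) * L ^ ((n+1) * r - 1) := by
          rw [← hpq, hC, hp]
          have hne1 : ((n * r - 1).factorial : ℝ) ≠ 0 := by positivity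
          have hne2 : (((p + q + 1)).factorial : ℝ) ≠ 0 := by positivity
          rw [pow_succ, hrf]
          field_simp
          ring
        rw [hfinal] at hcalc
        have hind : Set.indicator (Set.Icc (0:ℝ) ((n+1:ℕ):ℝ))
            (fun y => (r.factorial : ℝ) ^ (n+1) / (((n+1) * r - 1).factorial : ℝ)
              * (((n+1:ℕ):ℝ) - y) ^ ((n+1) * r - 1)) x
            = (r.factorial : ℝ) ^ (n+1) / (((n+1) * r - 1).factorial : ℝ) * L ^ ((n+1) * r - 1) := by
          have hmem : x ∈ Set.Icc (0:ℝ) (((n+1:ℕ)):ℝ) := by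
            constructor
            · exact hx0
            · push_cast; linarith
          rw [Set.indicator_of_mem hmem]
          congr 1
          rw [hL]
          push_cast
          ring_nf
        rw [hind]
        calc iterConv (gdens r) (n+1) x ≤ ∫ t : ℝ, h t := hmono
          _ = _ := hcalc
      · -- x outside [0, n+1] : the convolution vanishes
        have hzero : ∀ t : ℝ, F (x - t) * g t = 0 := by
          intro t
          by_cases hgt : t ∈ Set.Icc (0:ℝ) 1
          · have hxt : (x - t) ∉ Set.Icc (0:ℝ) (n:ℝ) := by
              intro hmem
              apply hx
              constructor
              · linarith [hmem.1, hgt.1]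
              · linarith [hmem.2, hgt.2]
            have h0 := Fbd (x - t)
            rw [Set.indicator_of_notMem hxt] at h0
            have : F (x - t) = 0 := le_antisymm h0 (Fnn _)
            rw [this, zero_mul]
          · have : g t = 0 := by
              rw [hgdef]; unfold gdens; rw [if_neg hgt]
            rw [this, mul_zero]
        have hval : iterConv (gdens r) (n+1) x = 0 := by
          rw [hconv]
          simp only [hzero]
          exact MeasureTheory.integral_zero ℝ ℝ
        rw [hval, Set.indicator_of_notMem (by push_cast at hx ⊢; exact hx)]


end Aux

theorem stmt_6 (r m : ℕ) (hr : 0 < r) (hm : 0 < m) :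
    ∀ x ∈ Set.Icc (0 : ℝ) (m : ℝ),
      iterConv (gdens r) m x ≤
        (r.factorial : ℝ) ^ m / ((m * r - 1).factorial : ℝ) * ((m : ℝ) - x) ^ (m * r - 1) := by
  intro x hx
  obtain ⟨_, _, hbd⟩ := main_bound r hr m hm
  have h := hbd x
  rwa [Set.indicator_of_mem hx] at h
end

section
/- Let m, r be positive integers. Then S_r(p,m) is asymptotically equivalent to m^p/m! as p → ∞; that is, lim_{p→∞} (m! · S_r(p,m))/m^p = 1. -/
namespace StirlingAux

open Finset

variable {m r p : ℕ}

def fiber (f : Fin p → Fin m) (i : Fin m) : Finset (Fin p) :=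
  Finset.univ.filter fun x => f x = i

lemma mem_fiber {f : Fin p → Fin m} {i : Fin m} {x : Fin p} :
    x ∈ fiber f i ↔ f x = i := by simp [fiber]

def Good (r : ℕ) (f : Fin p → Fin m) : Prop := ∀ i, r ≤ (fiber f i).card

lemma fiber_nonempty (hr : 0 < r) {f : Fin p → Fin m} (hf : Good r f) (i : Fin m) :
    (fiber f i).Nonempty := Finset.card_pos.1 (lt_of_lt_of_le hr (hf i))

lemma fiber_injective (hr : 0 < r) {f : Fin p → Fin m} (hf : Good r f) :
    Function.Injective (fiber f) := by
  intro i j h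
  obtain ⟨x, hx⟩ := fiber_nonempty hr hf i
  have hxj : x ∈ fiber f j := h ▸ hx
  rw [mem_fiber] at hx hxj
  rw [← hx, hxj]

def fpart (hr : 0 < r) (f : Fin p → Fin m) (hf : Good r f) :
    Finpartition (Finset.univ : Finset (Fin p)) where
  parts := Finset.univ.image (fiber f)
  supIndep := by
    rw [Finset.supIndep_iff_pairwiseDisjoint]
    rintro s hs t ht hst
    simp only [coe_image, coe_univ, Set.image_univ, Set.mem_range] at hs ht
    obtain ⟨i, rfl⟩ := hs
    obtain ⟨j, rfl⟩ := ht
    simp only [Function.onFun, id_eq, Finset.disjoint_left]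
    intro a ha hb
    rw [mem_fiber] at ha hb
    exact hst (by rw [← ha, ← hb])
  sup_parts := by
    rw [Finset.sup_image]
    ext x
    simp only [Finset.mem_sup, Finset.mem_univ, iff_true, Function.comp, id_eq]
    exact ⟨f x, by trivial, mem_fiber.2 rfl⟩
  bot_notMem := by
    intro h
    simp only [Finset.bot_eq_empty, Finset.mem_image] at h
    obtain ⟨i, -, hi⟩ := h
    have h2 := hf i
    rw [hi] at h2
    simp only [Finset.card_empty] at h2
    omega

lemma fpart_parts (hr : 0 < r) (f : Fin p → Fin m) (hf : Good r f) :
    (fpart hr f hf).parts = Finset.univ.image (fiber f) := rfl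

def Phi (hr : 0 < r) (f : {f : Fin p → Fin m // Good r f}) :
    {P : Finpartition (Finset.univ : Finset (Fin p)) //
      P.parts.card = m ∧ ∀ s ∈ P.parts, r ≤ s.card} :=
  ⟨fpart hr f.1 f.2, by
    rw [fpart_parts, Finset.card_image_of_injective _ (fiber_injective hr f.2),
      Finset.card_univ, Fintype.card_fin], by
    intro s hs
    rw [fpart_parts] at hs
    obtain ⟨i, -, rfl⟩ := Finset.mem_image.1 hs
    exact f.2 i⟩

def bwd (P : Finpartition (Finset.univ : Finset (Fin p)))
    (e : Fin m ≃ {t // t ∈ P.parts}) (x : Fin p) : Fin m :=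
  e.symm ⟨P.part x, P.part_mem.2 (Finset.mem_univ x)⟩

lemma bwd_eq_iff {P : Finpartition (Finset.univ : Finset (Fin p))}
    {e : Fin m ≃ {t // t ∈ P.parts}} {x : Fin p} {i : Fin m} :
    bwd P e x = i ↔ x ∈ (e i).1 := by
  rw [bwd, Equiv.symm_apply_eq]
  constructor
  · intro h
    have hx := P.mem_part (Finset.mem_univ x)
    have h' : P.part x = (e i).1 := congrArg Subtype.val h
    rwa [h'] at hx
  · intro hx
    exact Subtype.ext (P.part_eq_of_mem (e i).2 hx)

lemma fiber_bwd {P : Finpartition (Finset.univ : Finset (Fin p))}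
    {e : Fin m ≃ {t // t ∈ P.parts}} (i : Fin m) :
    fiber (bwd P e) i = (e i).1 := by
  ext x; rw [mem_fiber, bwd_eq_iff]

lemma good_bwd {P : Finpartition (Finset.univ : Finset (Fin p))}
    (hP : ∀ s ∈ P.parts, r ≤ s.card) (e : Fin m ≃ {t // t ∈ P.parts}) :
    Good r (bwd P e) :=
  fun i => by rw [fiber_bwd]; exact hP _ (e i).2

lemma Phi_bwd (hr : 0 < r) {P : Finpartition (Finset.univ : Finset (Fin p))}
    (hP1 : P.parts.card = m) (hP2 : ∀ s ∈ P.parts, r ≤ s.card)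
    (e : Fin m ≃ {t // t ∈ P.parts}) :
    Phi hr ⟨bwd P e, good_bwd hP2 e⟩ = ⟨P, hP1, hP2⟩ := by
  apply Subtype.ext
  apply Finpartition.ext
  change (fpart hr (bwd P e) (good_bwd hP2 e)).parts = P.parts
  rw [fpart_parts]
  ext t
  simp only [Finset.mem_image, Finset.mem_univ, true_and]
  constructor
  · rintro ⟨i, rfl⟩
    rw [fiber_bwd]
    exact (e i).2
  · intro ht
    exact ⟨e.symm ⟨t, ht⟩, by rw [fiber_bwd, Equiv.apply_symm_apply]⟩

lemma card_good (hr : 0 < r) (hm : 0 < m) (p : ℕ) :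
    Nat.card {f : Fin p → Fin m // Good r f} = m.factorial * stirlingAssoc r p m := by
  classical
  rw [← Nat.card_congr (Equiv.sigmaFiberEquiv (Phi (m := m) (p := p) hr))]
  rw [Nat.card_eq_fintype_card, Fintype.card_sigma]
  have key : ∀ P : {P : Finpartition (Finset.univ : Finset (Fin p)) //
      P.parts.card = m ∧ ∀ s ∈ P.parts, r ≤ s.card},
      Fintype.card {f // Phi hr f = P} = m.factorial := by
    rintro ⟨P, hP1, hP2⟩
    have hΨ : Function.Bijective (fun e : Fin m ≃ {t // t ∈ P.parts} =>
        (⟨⟨bwd P e, good_bwd hP2 e⟩, Phi_bwd hr hP1 hP2 e⟩ :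
          {f // Phi hr f = ⟨P, hP1, hP2⟩})) := by
      constructor
      · intro e e' h
        have h' : bwd P e = bwd P e' := congrArg (fun z => z.1.1) h
        apply Equiv.ext
        intro i
        apply Subtype.ext
        rw [← fiber_bwd (P := P) (e := e) i, ← fiber_bwd (P := P) (e := e') i, h']
      · rintro ⟨⟨f, hf⟩, hPf⟩
        have hparts : (fpart hr f hf).parts = P.parts :=
          congrArg (fun z => z.1.parts) hPf
        have hmem : ∀ i, fiber f i ∈ P.parts := by
          intro i
          rw [← hparts, fpart_parts]
          exact Finset.mem_image_of_mem _ (Finset.mem_univ i)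
        have hg : Function.Bijective
            (fun i : Fin m => (⟨fiber f i, hmem i⟩ : {t // t ∈ P.parts})) := by
          constructor
          · intro i j hij
            exact fiber_injective hr hf (congrArg Subtype.val hij)
          · rintro ⟨t, ht⟩
            rw [← hparts, fpart_parts] at ht
            obtain ⟨i, -, rfl⟩ := Finset.mem_image.1 ht
            exact ⟨i, rfl⟩
        refine ⟨Equiv.ofBijective _ hg, ?_⟩
        apply Subtype.ext
        apply Subtype.ext
        show bwd P (Equiv.ofBijective _ hg) = f
        funext x
        rw [bwd_eq_iff]
        exact mem_fiber.2 rfl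
    rw [Fintype.card_congr (Equiv.ofBijective _ hΨ).symm]
    rw [Fintype.card_equiv
      ((Fintype.equivFinOfCardEq (by rw [Fintype.card_coe, hP1]) :
        {t // t ∈ P.parts} ≃ Fin m)).symm]
    rw [Fintype.card_fin]
  rw [Finset.sum_congr rfl (fun P _ => key P), Finset.sum_const, Finset.card_univ,
    smul_eq_mul, stirlingAssoc, Nat.card_eq_fintype_card, mul_comm]

lemma card_split (p : ℕ) :
    Nat.card {f : Fin p → Fin m // Good r f} +
      Nat.card {f : Fin p → Fin m // ¬ Good r f} = m ^ p := by
  classical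
  rw [Nat.card_eq_fintype_card, Nat.card_eq_fintype_card, Fintype.card_subtype,
    Fintype.card_subtype, Finset.card_filter_add_card_filter_not,
    Finset.card_univ, Fintype.card_fun, Fintype.card_fin, Fintype.card_fin]

lemma card_bad_le (hr : 0 < r) (hm : 2 ≤ m) (p : ℕ) :
    Nat.card {f : Fin p → Fin m // ¬ Good r f}
      ≤ m * (r * (p + 1) ^ (r - 1)) * (m - 1) ^ p := by
  classical
  have step2 : ∀ i : Fin m,
      (Finset.univ.filter fun f : Fin p → Fin m => (fiber f i).card < r).card
      ≤ (Finset.univ.filter fun s : Finset (Fin p) => s.card < r).card * (m - 1) ^ p := by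
    intro i
    obtain ⟨j0, hj0⟩ := Fintype.exists_ne_of_one_lt_card
      (by rw [Fintype.card_fin]; omega) i
    rw [← Fintype.card_subtype]
    have hinj : Fintype.card {f : Fin p → Fin m // (fiber f i).card < r}
        ≤ Fintype.card ({s : Finset (Fin p) // s.card < r} × (Fin p → {j : Fin m // j ≠ i})) := by
      apply Fintype.card_le_of_injective (fun f =>
        (⟨⟨fiber f.1 i, f.2⟩, fun x => if h : f.1 x = i then ⟨j0, hj0⟩ else ⟨f.1 x, h⟩⟩))
      rintro ⟨f, hf⟩ ⟨f', hf'⟩ h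
      rw [Prod.ext_iff] at h
      obtain ⟨h1, h2⟩ := h
      dsimp only at h1 h2
      have h1' : fiber f i = fiber f' i := congrArg Subtype.val h1
      apply Subtype.ext
      funext x
      show f x = f' x
      by_cases hx : f x = i
      · have hx2 : x ∈ fiber f' i := h1' ▸ mem_fiber.2 hx
        rw [hx, mem_fiber.1 hx2]
      · have hx' : f' x ≠ i := by
          intro hc
          exact hx (mem_fiber.1 (h1'.symm ▸ mem_fiber.2 hc))
        have h3 := congrFun h2 x
        simp only [dif_neg hx, dif_neg hx'] at h3
        exact congrArg Subtype.val h3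
    have hprod : Fintype.card
        ({s : Finset (Fin p) // s.card < r} × (Fin p → {j : Fin m // j ≠ i}))
        = (Finset.univ.filter fun s : Finset (Fin p) => s.card < r).card * (m - 1) ^ p := by
      have hcne : Fintype.card {j : Fin m // j ≠ i} = m - 1 := by
        rw [Fintype.card_subtype, Finset.filter_ne', Finset.card_erase_of_mem (Finset.mem_univ i),
          Finset.card_univ, Fintype.card_fin]
      rw [Fintype.card_prod, Fintype.card_subtype, Fintype.card_fun, hcne, Fintype.card_fin]
    rw [← hprod]
    exact hinj
  have step3 : (Finset.univ.filter fun s : Finset (Fin p) => s.card < r).card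
      ≤ r * (p + 1) ^ (r - 1) := by
    calc (Finset.univ.filter fun s : Finset (Fin p) => s.card < r).card
        ≤ ((Finset.range r).biUnion fun j => Finset.univ.powersetCard j).card := by
          apply Finset.card_le_card
          intro s hs
          rw [Finset.mem_filter] at hs
          exact Finset.mem_biUnion.2 ⟨s.card, Finset.mem_range.2 hs.2,
            Finset.mem_powersetCard.2 ⟨Finset.subset_univ _, rfl⟩⟩
      _ ≤ ∑ j ∈ Finset.range r, (Finset.univ.powersetCard j : Finset (Finset (Fin p))).card :=
          Finset.card_biUnion_le
      _ ≤ ∑ _j ∈ Finset.range r, (p + 1) ^ (r - 1) := by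
          apply Finset.sum_le_sum
          intro j hj
          have hjr := Finset.mem_range.1 hj
          rw [Finset.card_powersetCard, Finset.card_univ, Fintype.card_fin]
          calc p.choose j ≤ p ^ j := Nat.choose_le_pow p j
            _ ≤ (p + 1) ^ j := Nat.pow_le_pow_left (Nat.le_succ p) j
            _ ≤ (p + 1) ^ (r - 1) := Nat.pow_le_pow_right (Nat.le_add_left 1 p) (by omega)
      _ = r * (p + 1) ^ (r - 1) := by rw [Finset.sum_const, Finset.card_range, smul_eq_mul]
  calc Nat.card {f : Fin p → Fin m // ¬ Good r f}
      = (Finset.univ.filter fun f : Fin p → Fin m => ¬ Good r f).card := by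
        rw [Nat.card_eq_fintype_card, Fintype.card_subtype]
    _ ≤ (Finset.univ.biUnion fun i : Fin m =>
          Finset.univ.filter fun f : Fin p → Fin m => (fiber f i).card < r).card := by
        apply Finset.card_le_card
        intro f hf
        obtain ⟨-, hf⟩ := Finset.mem_filter.1 hf
        unfold Good at hf
        push_neg at hf
        obtain ⟨i, hi⟩ := hf
        exact Finset.mem_biUnion.2 ⟨i, Finset.mem_univ _,
          Finset.mem_filter.2 ⟨Finset.mem_univ _, hi⟩⟩
    _ ≤ ∑ i : Fin m,
          (Finset.univ.filter fun f : Fin p → Fin m => (fiber f i).card < r).card :=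
        Finset.card_biUnion_le
    _ ≤ ∑ _i : Fin m,
          (Finset.univ.filter fun s : Finset (Fin p) => s.card < r).card * (m - 1) ^ p :=
        Finset.sum_le_sum fun i _ => step2 i
    _ = m * ((Finset.univ.filter fun s : Finset (Fin p) => s.card < r).card * (m - 1) ^ p) := by
        rw [Finset.sum_const, Finset.card_univ, Fintype.card_fin, smul_eq_mul]
    _ ≤ m * (r * (p + 1) ^ (r - 1) * (m - 1) ^ p) :=
        Nat.mul_le_mul le_rfl (Nat.mul_le_mul step3 le_rfl)
    _ = m * (r * (p + 1) ^ (r - 1)) * (m - 1) ^ p := by ring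

lemma good_of_one (hp : r ≤ p) (f : Fin p → Fin 1) : Good r f := by
  intro i
  have huniv : fiber f i = Finset.univ := by
    ext x
    simp [mem_fiber, Subsingleton.elim (f x) i]
  rw [huniv, Finset.card_univ, Fintype.card_fin]
  exact hp

end StirlingAux

theorem stmt_13 (m r : ℕ) (hm : 0 < m) (hr : 0 < r) :
    Filter.Tendsto
      (fun p : ℕ => (m.factorial : ℝ) * (stirlingAssoc r p m : ℝ) / (m : ℝ) ^ p)
      Filter.atTop (nhds 1) := by
  rcases Nat.lt_or_ge m 2 with h2 | h2
  · -- m = 1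
    have hm1 : m = 1 := by omega
    subst hm1
    refine (tendsto_const_nhds : Filter.Tendsto (fun _ : ℕ => (1:ℝ)) _ _).congr' ?_
    filter_upwards [Filter.eventually_ge_atTop r] with p hp
    have hS : Nat.factorial 1 * stirlingAssoc r p 1 = 1 := by
      rw [← StirlingAux.card_good hr hm p]
      rw [Nat.card_congr (Equiv.subtypeUnivEquiv (StirlingAux.good_of_one hp))]
      rw [Nat.card_unique]
    have hS1 : stirlingAssoc r p 1 = 1 := by
      simpa [Nat.factorial] using hS
    simp [hS1, Nat.factorial]
  · -- 2 ≤ m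
    have hm0 : (0:ℝ) < (m:ℝ) := by exact_mod_cast hm
    set c : ℝ := ((m - 1 : ℕ) : ℝ) with hc
    set q : ℝ := c / (m:ℝ) with hq
    have hc0 : (0:ℝ) < c := by
      rw [hc]
      exact_mod_cast Nat.sub_pos_of_lt h2
    have hq0 : (0:ℝ) < q := div_pos hc0 hm0
    have hq1 : q < 1 := by
      rw [hq, div_lt_one hm0, hc]
      exact_mod_cast Nat.sub_lt (by omega) one_pos
    have hkey : ∀ p : ℕ, (m.factorial : ℝ) * (stirlingAssoc r p m : ℝ) =
        (m:ℝ) ^ p - (Nat.card {f : Fin p → Fin m // ¬ StirlingAux.Good r f} : ℝ) := by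
      intro p
      have hsplit := StirlingAux.card_split (m := m) (r := r) p
      rw [StirlingAux.card_good hr hm p] at hsplit
      have hcast := congrArg (Nat.cast : ℕ → ℝ) hsplit
      push_cast at hcast
      linarith
    have hB : Filter.Tendsto
        (fun p : ℕ => (Nat.card {f : Fin p → Fin m // ¬ StirlingAux.Good r f} : ℝ) / (m:ℝ) ^ p)
        Filter.atTop (nhds 0) := by
      have hub : ∀ p : ℕ,
          (Nat.card {f : Fin p → Fin m // ¬ StirlingAux.Good r f} : ℝ) / (m:ℝ) ^ p
          ≤ ((m:ℝ) * r) * (((p:ℝ) + 1) ^ (r - 1) * q ^ p) := by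
        intro p
        have hmp : (0:ℝ) < (m:ℝ) ^ p := by positivity
        rw [div_le_iff₀ hmp]
        have hb := StirlingAux.card_bad_le hr h2 p
        have hqc : q ^ p * (m:ℝ) ^ p = c ^ p := by
          rw [hq, ← mul_pow, div_mul_cancel₀ _ (ne_of_gt hm0)]
        calc (Nat.card {f : Fin p → Fin m // ¬ StirlingAux.Good r f} : ℝ)
            ≤ ((m * (r * (p + 1) ^ (r - 1)) * (m - 1) ^ p : ℕ) : ℝ) := by exact_mod_cast hb
          _ = (m:ℝ) * ((r:ℝ) * ((p:ℝ) + 1) ^ (r - 1)) * c ^ p := by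
              rw [Nat.cast_mul, Nat.cast_mul, Nat.cast_pow, Nat.cast_mul, Nat.cast_pow,
                Nat.cast_add, Nat.cast_one, ← hc]
          _ = ((m:ℝ) * r) * (((p:ℝ) + 1) ^ (r - 1) * q ^ p) * (m:ℝ) ^ p := by
              rw [mul_assoc (((m:ℝ) * r)) _ ((m:ℝ) ^ p), mul_assoc (((p:ℝ) + 1) ^ (r - 1)), hqc]
              ring
      have h1 : Filter.Tendsto (fun n : ℕ => ((n:ℝ)) ^ (r - 1) * q ^ n)
          Filter.atTop (nhds 0) :=
        tendsto_pow_const_mul_const_pow_of_lt_one (r - 1) hq0.le hq1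
      have h2' : Filter.Tendsto (fun p : ℕ => (((p + 1 : ℕ) : ℝ)) ^ (r - 1) * q ^ (p + 1))
          Filter.atTop (nhds 0) := h1.comp (Filter.tendsto_add_atTop_nat 1)
      have h3 : Filter.Tendsto (fun p : ℕ => ((p:ℝ) + 1) ^ (r - 1) * q ^ p)
          Filter.atTop (nhds 0) := by
        have h4 := h2'.const_mul (1 / q)
        rw [mul_zero] at h4
        apply h4.congr
        intro p
        push_cast
        rw [pow_succ]
        field_simp
      have hg : Filter.Tendsto (fun p : ℕ => ((m:ℝ) * r) * (((p:ℝ) + 1) ^ (r - 1) * q ^ p))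
          Filter.atTop (nhds 0) := by
        have h5 := h3.const_mul ((m:ℝ) * r)
        rwa [mul_zero] at h5
      exact squeeze_zero (fun p => div_nonneg (Nat.cast_nonneg _) (by positivity)) hub hg
    have hfin : Filter.Tendsto
        (fun p : ℕ => 1 - (Nat.card {f : Fin p → Fin m // ¬ StirlingAux.Good r f} : ℝ) / (m:ℝ) ^ p)
        Filter.atTop (nhds 1) := by
      have h6 := hB.const_sub 1
      rwa [sub_zero] at h6
    apply hfin.congr
    intro p
    have hmp : ((m:ℝ) ^ p) ≠ 0 := by positivity
    rw [hkey p, sub_div, div_self hmp]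
end

section
/- Let k be a natural number and m a positive integer. Then lim_{r→∞} r^k · M_r(k,m) = (m−1+k)!/(m−1)!, the limit being taken over positive integers r tending to infinity. (The right-hand side equals the k-th moment of a sum of m i.i.d. standard exponential random variables.) -/
open MeasureTheory Filter

section Aux

/-- The one-dimensional beta-type integral with natural exponents. -/
lemma beta_nat_aux (a b : ℕ) : ∫ x in (0:ℝ)..1, x^a * (1-x)^b
    = (a.factorial * b.factorial : ℝ) / (a+b+1).factorial := by
  induction a generalizing b with
  | zero =>
    simp only [pow_zero, one_mul]
    rw [intervalIntegral.integral_comp_sub_left (fun x : ℝ => x^b) 1]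
    norm_num [integral_pow, Nat.factorial_succ]
    rw [mul_comm, eq_div_iff (by positivity)]
    field_simp
  | succ a ih =>
    have key := intervalIntegral.integral_mul_deriv_eq_deriv_mul
      (u := fun x : ℝ => x^(a+1)) (v := fun x : ℝ => -(1-x)^(b+1)/(b+1))
      (u' := fun x : ℝ => (a+1)*x^a) (v' := fun x : ℝ => (1-x)^b)
      (a := (0:ℝ)) (b := 1)
      (fun x _ => by simpa using hasDerivAt_pow (a+1) x)
      (fun x _ => by
        have h1 : HasDerivAt (fun x : ℝ => (1-x)^(b+1)) (((b:ℝ)+1)*(1-x)^b * (-1)) x := by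
          have := (hasDerivAt_pow (b+1) (1-x)).comp x
            (by simpa using (hasDerivAt_id x).const_sub 1)
          simpa [Function.comp_def] using this
        have := (h1.neg).div_const ((b:ℝ)+1)
        convert this using 1
        · funext y; simp only [Pi.neg_apply]
        · rw [eq_div_iff (by positivity)]; ring)
      (by apply Continuous.intervalIntegrable; continuity)
      (by apply Continuous.intervalIntegrable; continuity)
    simp only [one_pow, sub_self, zero_pow (Nat.succ_ne_zero b), neg_zero, zero_div, mul_zero,
      zero_pow (Nat.succ_ne_zero a), zero_mul, sub_zero, zero_sub] at key
    rw [key]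
    have : ∫ x in (0:ℝ)..1, (↑a + 1) * x ^ a * (-(1 - x) ^ (b + 1) / (↑b + 1))
        = (-((a:ℝ)+1)/((b:ℝ)+1)) * ∫ x in (0:ℝ)..1, x ^ a * (1 - x) ^ (b+1) := by
      rw [← intervalIntegral.integral_const_mul]
      congr 1; ext x; ring
    rw [this, ih (b+1)]
    have h1 : ((a:ℕ)+(b+1)+1) = (a+1+b+1) := by omega
    rw [h1]
    rw [Nat.factorial_succ a, Nat.factorial_succ b]
    have hC : ((a+1+b+1).factorial : ℝ) ≠ 0 := by positivity
    have hb : ((b:ℝ)+1) ≠ 0 := by positivity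
    push_cast
    field_simp

/-- The single-coordinate integral appearing in the factorization of `momentM`. -/
noncomputable def Jaux (n r : ℕ) : ℝ := ∫ x in Set.Icc (0:ℝ) 1, x^n * ((r:ℝ) * (1-x)^(r-1))

lemma Jaux_val (n r : ℕ) (hr : 1 ≤ r) :
    Jaux n r = (r:ℝ) * ((n.factorial * (r-1).factorial : ℝ) / (n+r).factorial) := by
  have : Jaux n r = (r:ℝ) * ∫ x in (0:ℝ)..1, x^n * (1-x)^(r-1) := by
    rw [Jaux, MeasureTheory.integral_Icc_eq_integral_Ioc,
      ← intervalIntegral.integral_of_le (by norm_num : (0:ℝ) ≤ 1),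
      ← intervalIntegral.integral_const_mul]
    congr 1; ext x; ring
  rw [this, beta_nat_aux, show n + (r-1) + 1 = n + r from by omega]

lemma fact_add_eq_aux (n r : ℕ) :
    (((n+r).factorial : ℝ)) = (r.factorial : ℝ) * ∏ j ∈ Finset.range n, ((r:ℝ) + j + 1) := by
  induction n with
  | zero => simp
  | succ n ih =>
    rw [Finset.prod_range_succ, show n+1+r = (n+r)+1 by omega, Nat.factorial_succ]
    push_cast
    rw [ih]; ring

lemma tendsto_ratio_aux (c : ℝ) (hc : 0 ≤ c) :
    Tendsto (fun r : ℕ => (r:ℝ)/((r:ℝ)+c)) atTop (nhds 1) := by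
  have h : Tendsto (fun r : ℕ => (r:ℝ)+c) atTop atTop :=
    Filter.tendsto_atTop_add_const_right _ c tendsto_natCast_atTop_atTop
  have h0 : Tendsto (fun r : ℕ => c/((r:ℝ)+c)) atTop (nhds 0) :=
    Tendsto.div_atTop tendsto_const_nhds h
  have h1 : Tendsto (fun r : ℕ => 1 - c/((r:ℝ)+c)) atTop (nhds 1) := by
    simpa using (tendsto_const_nhds (x := (1:ℝ))).sub h0
  refine h1.congr' ?_
  filter_upwards [Filter.eventually_gt_atTop 0] with r hr
  have hrc : (r:ℝ) + c > 0 := by positivity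
  field_simp
  ring

lemma tendsto_pow_mul_Jaux (n : ℕ) :
    Tendsto (fun r : ℕ => (r:ℝ)^n * Jaux n r) atTop (nhds (n.factorial : ℝ)) := by
  have hfactor : ∀ j : ℕ, Tendsto (fun r : ℕ => (r:ℝ)/((r:ℝ)+(j:ℝ)+1)) atTop (nhds 1) :=
    fun j => by simpa [← add_assoc] using tendsto_ratio_aux ((j:ℝ)+1) (by positivity)
  have hlim : Tendsto (fun r : ℕ => (n.factorial : ℝ) * ∏ j ∈ Finset.range n,
      ((r:ℝ)/((r:ℝ)+(j:ℝ)+1))) atTop (nhds ((n.factorial : ℝ))) := by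
    have := Filter.Tendsto.const_mul (b := (n.factorial:ℝ))
      (tendsto_finset_prod (Finset.range n) (fun j _ => hfactor j))
    simpa using this
  refine hlim.congr' ?_
  filter_upwards [Filter.eventually_ge_atTop 1] with r hr
  rw [Jaux_val n r hr]
  have hfac : ((r:ℝ)) * ((r-1).factorial : ℝ) = (r.factorial : ℝ) := by
    rw [show r = (r-1)+1 from by omega, Nat.factorial_succ]
    push_cast [show r-1+1 = r from by omega]
    ring
  have hP : (((n+r).factorial : ℝ)) = (r.factorial : ℝ) * ∏ j ∈ Finset.range n, ((r:ℝ) + j + 1) :=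
    fact_add_eq_aux n r
  have hPpos : ∀ j ∈ Finset.range n, ((r:ℝ) + j + 1) ≠ 0 := fun j _ => by positivity
  have hprodne : (∏ j ∈ Finset.range n, ((r:ℝ) + j + 1)) ≠ 0 := Finset.prod_ne_zero_iff.2 hPpos
  have hrfne : (r.factorial : ℝ) ≠ 0 := by positivity
  have key : (r:ℝ) * ((n.factorial * (r-1).factorial : ℝ) / (n+r).factorial)
      = (n.factorial : ℝ) * ((r.factorial : ℝ) / (n+r).factorial) := by
    rw [← hfac]; ring
  rw [key, hP, Finset.prod_div_distrib, Finset.prod_const, Finset.card_range]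
  field_simp

lemma cube_integral_prod_aux (m : ℕ) (g : Fin m → ℝ → ℝ) :
    ∫ x in Set.Icc (0 : Fin m → ℝ) 1, ∏ i, g i (x i)
      = ∏ i, ∫ t in Set.Icc (0:ℝ) 1, g i t := by
  have hmeas : MeasurableSet (Set.Icc (0 : Fin m → ℝ) 1) := measurableSet_Icc
  rw [← MeasureTheory.integral_indicator hmeas]
  have hpt : ∀ x : Fin m → ℝ, (Set.Icc (0 : Fin m → ℝ) 1).indicator
      (fun x => ∏ i, g i (x i)) x = ∏ i, (Set.Icc (0:ℝ) 1).indicator (g i) (x i) := by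
    intro x
    rw [← Set.pi_univ_Icc]
    simp only [Pi.zero_apply, Pi.one_apply]
    by_cases hx : x ∈ Set.pi Set.univ (fun _ : Fin m => Set.Icc (0:ℝ) 1)
    · rw [Set.indicator_of_mem hx]
      exact Finset.prod_congr rfl fun i _ =>
        (Set.indicator_of_mem (hx i (Set.mem_univ i)) _).symm
    · rw [Set.indicator_of_notMem hx]
      rw [Set.mem_univ_pi] at hx
      push_neg at hx
      obtain ⟨i, hi⟩ := hx
      exact (Finset.prod_eq_zero (Finset.mem_univ i)
        (Set.indicator_of_notMem hi _)).symm
  simp_rw [hpt]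
  rw [MeasureTheory.integral_fintype_prod_volume_eq_prod (ι := Fin m)
    (f := fun i => (Set.Icc (0:ℝ) 1).indicator (g i))]
  exact Finset.prod_congr rfl fun i _ =>
    MeasureTheory.integral_indicator measurableSet_Icc

end Aux

lemma momentM_eq_sum (r m k : ℕ) :
    momentM r m k = ∑ a ∈ Finset.piAntidiag (Finset.univ : Finset (Fin m)) k,
      (Nat.multinomial Finset.univ a : ℝ) * ∏ i, Jaux (a i) r := by
  rw [momentM]
  have hint : ∀ x : Fin m → ℝ, (∑ i, x i)^k * ∏ i, (r:ℝ) * (1 - x i)^(r-1)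
      = ∑ a ∈ Finset.piAntidiag (Finset.univ : Finset (Fin m)) k,
        (Nat.multinomial Finset.univ a : ℝ) *
          ∏ i, ((x i)^(a i) * ((r:ℝ) * (1 - x i)^(r-1))) := by
    intro x
    rw [Finset.sum_pow_eq_sum_piAntidiag, Finset.sum_mul]
    refine Finset.sum_congr rfl fun a _ => ?_
    rw [mul_assoc, ← Finset.prod_mul_distrib]
  simp_rw [hint]
  rw [MeasureTheory.integral_finset_sum]
  · refine Finset.sum_congr rfl fun a _ => ?_
    rw [MeasureTheory.integral_const_mul,
      cube_integral_prod_aux m (fun i t => t^(a i) * ((r:ℝ)*(1-t)^(r-1)))]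
    rfl
  · intro a _
    apply MeasureTheory.Integrable.const_mul
    apply Continuous.integrableOn_Icc
    continuity

theorem stmt_15 (k : ℕ) (m : ℕ) (hm : 0 < m) :
    Filter.Tendsto (fun r : ℕ => (r : ℝ) ^ k * momentM r m k)
      Filter.atTop (nhds (((m - 1 + k).factorial : ℝ) / ((m - 1).factorial : ℝ))) := by
  set S := Finset.piAntidiag (Finset.univ : Finset (Fin m)) k with hS
  have hstep : ∀ r : ℕ, (r:ℝ)^k * momentM r m k
      = ∑ a ∈ S, (Nat.multinomial Finset.univ a : ℝ) * ∏ i, ((r:ℝ)^(a i) * Jaux (a i) r) := by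
    intro r
    rw [momentM_eq_sum, Finset.mul_sum]
    refine Finset.sum_congr rfl fun a ha => ?_
    have hsum : ∑ i, a i = k := (Finset.mem_piAntidiag.1 ha).1
    have hpow : (r:ℝ)^k = ∏ i, (r:ℝ)^(a i) := by
      rw [Finset.prod_pow_eq_pow_sum, hsum]
    rw [hpow, Finset.prod_mul_distrib]
    ring
  have hT : Filter.Tendsto (fun r : ℕ => ∑ a ∈ S,
      (Nat.multinomial Finset.univ a : ℝ) * ∏ i, ((r:ℝ)^(a i) * Jaux (a i) r)) Filter.atTop
      (nhds (∑ a ∈ S, (Nat.multinomial Finset.univ a : ℝ) * ∏ i, ((a i).factorial : ℝ))) :=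
    tendsto_finset_sum _ (fun a _ =>
      (tendsto_finset_prod _ (fun i _ => tendsto_pow_mul_Jaux (a i))).const_mul _)
  have hval : (∑ a ∈ S, (Nat.multinomial Finset.univ a : ℝ) * ∏ i, ((a i).factorial : ℝ))
      = ((m - 1 + k).factorial : ℝ) / ((m - 1).factorial : ℝ) := by
    have hterm : ∀ a ∈ S, (Nat.multinomial Finset.univ a : ℝ) * ∏ i, ((a i).factorial : ℝ)
        = (k.factorial : ℝ) := by
      intro a ha
      have hsum : ∑ i, a i = k := (Finset.mem_piAntidiag.1 ha).1
      have := Nat.multinomial_spec (Finset.univ : Finset (Fin m)) a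
      rw [hsum] at this
      push_cast [← this]
      ring
    rw [Finset.sum_congr rfl hterm, Finset.sum_const, nsmul_eq_mul]
    have hcard : S.card = (m + k - 1).choose k := by
      rw [hS, ← Finset.map_sym_eq_piAntidiag, Finset.card_map, Finset.sym_univ,
        Finset.card_univ, Sym.card_sym_eq_choose, Fintype.card_fin]
    have hmk : m + k - 1 = m - 1 + k := by omega
    have hch := Nat.choose_mul_factorial_mul_factorial (Nat.le_add_left k (m-1))
    rw [Nat.add_sub_cancel] at hch
    rw [hcard, hmk, eq_div_iff (by positivity)]
    exact_mod_cast hch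
  rw [← hval]
  exact hT.congr (fun r => (hstep r).symm)
end
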